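/- arXiv:2005.02063 — 4 statements merged into one kernel-verified Lean document; each statement's English description precedes it below -/
import Mathlib

section
/- Let $I$ be a compact interval and $f, g : I \to \mathbb{R}$ be continuous and strictly monotone. Define $d_{f,g}(t) := \sup \{ |\mathscr{A}_f(\mathbb{P}) - \mathscr{A}_g(\mathbb{P})| : \mathbb{P} \text{ a compactly supported Borel probability measure on } I \text{ with } |\gamma(\mathbb{P})| \le t \}$ for $t \in (0, |I|]$, where $\gamma(\mathbb{P}) = [\inf \operatorname{supp} \mathbb{P}, \sup \operatorname{supp} \mathbb{P}]$. Then $d_{f,g}(t) < t$ for all $t \in (0, |I|]$. -/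
open MeasureTheory Set Filter Topology

noncomputable section

/-- The topological support of a Borel measure on `ℝ`. -/
def msupp (mu : Measure ℝ) : Set ℝ := {x | ∀ ε > 0, 0 < mu (Metric.ball x ε)}

/-- Infimum of the support. -/
def suppInf (mu : Measure ℝ) : ℝ := sInf (msupp mu)

/-- Supremum of the support. -/
def suppSup (mu : Measure ℝ) : ℝ := sSup (msupp mu)

/-- `γ(P) = [inf supp P, sup supp P]`. -/
def gammaSet (mu : Measure ℝ) : Set ℝ := Icc (suppInf mu) (suppSup mu)

/-- `|γ(P)|`, the diameter of the support. -/
def gammaLen (mu : Measure ℝ) : ℝ := suppSup mu - suppInf mu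

/-- `P ∈ 𝒫(I)`: a compactly supported Borel probability measure concentrated on `I`. -/
def IsCSP (I : Set ℝ) (mu : Measure ℝ) : Prop :=
  IsProbabilityMeasure mu ∧ mu Iᶜ = 0 ∧ IsCompact (closure (msupp mu))

/-- `f ∈ CM(I)`: continuous and strictly monotone on `I`. -/
def CM (f : ℝ → ℝ) (I : Set ℝ) : Prop :=
  ContinuousOn f I ∧ (StrictMonoOn f I ∨ StrictAntiOn f I)

/-- The integral quasiarithmetic mean `𝒜_f(P) = f⁻¹(∫ f dP)` (inverse taken on `I`). -/
def QAM (f : ℝ → ℝ) (I : Set ℝ) (mu : Measure ℝ) : ℝ :=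
  Function.invFunOn f I (∫ t, f t ∂mu)

/-- The Lebesgue σ-algebra on `ℝ` (completion of the Borel σ-algebra w.r.t. Lebesgue measure). -/
def Leb : MeasurableSpace ℝ where
  MeasurableSet' s := NullMeasurableSet s (volume : Measure ℝ)
  measurableSet_empty := MeasurableSet.empty.nullMeasurableSet
  measurableSet_compl := fun _ hs => hs.compl
  measurableSet_iUnion := fun _ hf => NullMeasurableSet.iUnion hf

/-- An admissible family `(f_x)_{x∈[0,1]}`: each `f_x` continuous and strictly monotone on `I`,
and `(t,x) ↦ f_x(t)` measurable w.r.t. the product of the Borel σ-algebra and the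
Lebesgue σ-algebra. -/
def Admissible (F : ℝ → ℝ → ℝ) (I : Set ℝ) : Prop :=
  (∀ x ∈ Icc (0:ℝ) 1, CM (F x) I) ∧
  Measurable[(inferInstance : MeasurableSpace ℝ).prod Leb] (fun p : ℝ × ℝ => F p.2 p.1)

/-- `𝐀_𝓕(P)`: the distribution of `x ↦ 𝒜_{f_x}(P)` under Lebesgue measure on `[0,1]`. -/
def AF (F : ℝ → ℝ → ℝ) (I : Set ℝ) (mu : Measure ℝ) : Measure ℝ :=
  Measure.map (fun x => QAM (F x) I mu) ((volume : Measure ℝ).restrict (Icc 0 1))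

/-- Iterates of `𝐀_𝓕`. -/
def AFiter (F : ℝ → ℝ → ℝ) (I : Set ℝ) (n : ℕ) (mu : Measure ℝ) : Measure ℝ :=
  (AF F I)^[n] mu

/-- A mean on `𝒫(I)`: `M(P) ∈ γ(P)`. -/
def IsMean (I : Set ℝ) (M : Measure ℝ → ℝ) : Prop :=
  ∀ mu : Measure ℝ, IsCSP I mu → M mu ∈ gammaSet mu

/-- `M` is `𝐀_𝓕`-invariant: `M ∘ 𝐀_𝓕 = M` on `𝒫(I)`. -/
def IsInvariantMean (F : ℝ → ℝ → ℝ) (I : Set ℝ) (M : Measure ℝ → ℝ) : Prop :=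
  ∀ mu : Measure ℝ, IsCSP I mu → M (AF F I mu) = M mu

/-- The lower invariant mean `𝓛_𝓕`. -/
def LF (F : ℝ → ℝ → ℝ) (I : Set ℝ) (mu : Measure ℝ) : ℝ :=
  ⨆ n, suppInf (AFiter F I n mu)

/-- The upper invariant mean `𝓤_𝓕`. -/
def UF (F : ℝ → ℝ → ℝ) (I : Set ℝ) (mu : Measure ℝ) : ℝ :=
  ⨅ n, suppSup (AFiter F I n mu)

/-- Variance of a measure on `ℝ`. -/
def Var (mu : Measure ℝ) : ℝ := (∫ x, x ^ 2 ∂mu) - (∫ x, x ∂mu) ^ 2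

/-- The two-point measure `θ·δ_x + (1-θ)·δ_y`. -/
def twoPt (x y θ : ℝ) : Measure ℝ :=
  ENNReal.ofReal θ • Measure.dirac x + ENNReal.ofReal (1 - θ) • Measure.dirac y


lemma msupp_compl_null (mu : Measure ℝ) : mu (msupp mu)ᶜ = 0 := by
  apply measure_null_of_locally_null
  intro x hx
  simp only [msupp, mem_compl_iff, mem_setOf_eq, not_forall] at hx
  obtain ⟨ε, hε, h⟩ := hx
  refine ⟨Metric.ball x ε, mem_nhdsWithin_of_mem_nhds (Metric.ball_mem_nhds x hε), ?_⟩
  simpa using h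

lemma msupp_subset_of_null {mu : Measure ℝ} {s : Set ℝ} (hs : IsClosed s)
    (h : mu sᶜ = 0) : msupp mu ⊆ s := by
  intro x hx
  by_contra hxs
  obtain ⟨ε, hε, hball⟩ := Metric.isOpen_iff.1 hs.isOpen_compl x hxs
  have h0 : mu (Metric.ball x ε) = 0 := measure_mono_null hball h
  have := hx ε hε
  simp [h0] at this

lemma msupp_nonempty (mu : Measure ℝ) [IsProbabilityMeasure mu] : (msupp mu).Nonempty := by
  by_contra h
  rw [not_nonempty_iff_eq_empty] at h
  have := msupp_compl_null mu
  rw [h, compl_empty] at this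
  simp [measure_univ] at this

-- gap constant
lemma gap_const {a b ε : ℝ} (hε : 0 < ε) (hab : a + ε ≤ b) {f : ℝ → ℝ}
    (hf : ContinuousOn f (Icc a b)) (hfm : StrictMonoOn f (Icc a b)) :
    ∃ c > 0, ∀ v ∈ Icc (a + ε) b, c ≤ f v - f (v - ε) := by
  have hsub1 : Icc (a + ε) b ⊆ Icc a b := Icc_subset_Icc (by linarith) le_rfl
  have hmaps : ∀ v ∈ Icc (a + ε) b, v - ε ∈ Icc a b := by
    intro v hv; exact ⟨by linarith [hv.1], by linarith [hv.2]⟩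
  have hφ : ContinuousOn (fun v => f v - f (v - ε)) (Icc (a + ε) b) := by
    apply ContinuousOn.sub (hf.mono hsub1)
    exact hf.comp ((continuous_sub_right ε).continuousOn) hmaps
  obtain ⟨v₀, hv₀, hmin⟩ := isCompact_Icc.exists_isMinOn (nonempty_Icc.2 hab) hφ
  refine ⟨f v₀ - f (v₀ - ε), ?_, fun v hv => hmin hv⟩
  have : f (v₀ - ε) < f v₀ := hfm (hmaps v₀ hv₀) (hsub1 hv₀) (by linarith)
  linarith

lemma ucont_const {a b : ℝ} {f : ℝ → ℝ} (hf : ContinuousOn f (Icc a b)) {c : ℝ} (hc : 0 < c) :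
    ∃ δ > 0, ∀ x ∈ Icc a b, ∀ y ∈ Icc a b, dist x y < δ → dist (f x) (f y) < c :=
  Metric.uniformContinuousOn_iff.1 (isCompact_Icc.uniformContinuousOn_of_continuous hf) c hc

lemma clamp_facts' {a b : ℝ} (hab : a ≤ b) {f : ℝ → ℝ} (hf : ContinuousOn f (Icc a b)) :
    ∃ F : ℝ → ℝ, Continuous F ∧ (∀ x ∈ Icc a b, F x = f x) ∧
      ∀ (mu : Measure ℝ), IsFiniteMeasure mu → Integrable F mu := by
  set c : ℝ → ℝ := fun x => max a (min b x) with hc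
  have hcc : Continuous c := continuous_const.max (continuous_const.min continuous_id)
  have hmaps : ∀ x, c x ∈ Icc a b := by
    intro x
    exact ⟨le_max_left _ _, by simp only [hc, max_le_iff]; exact ⟨hab, min_le_left _ _⟩⟩
  refine ⟨f ∘ c, hf.comp_continuous hcc hmaps, ?_, ?_⟩
  · intro x hx
    have : c x = x := by
      simp only [hc]; rw [min_eq_right hx.2, max_eq_right hx.1]
    simp [this]
  · intro mu hmu
    obtain ⟨C, hC⟩ := isCompact_Icc.exists_bound_of_continuousOn hf
    refine (integrable_const C).mono' ((hf.comp_continuous hcc hmaps).aestronglyMeasurable) ?_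
    exact Eventually.of_forall fun x => hC _ (hmaps x)

lemma top_mass {a b α β ε c A : ℝ} (hab : a ≤ b) {f : ℝ → ℝ}
    (hf : ContinuousOn f (Icc a b)) (hfm : StrictMonoOn f (Icc a b))
    (mu : Measure ℝ) [IsProbabilityMeasure mu]
    (hnull : mu (Icc α β)ᶜ = 0) (haα : a ≤ α) (hβb : β ≤ b)
    (hε0 : 0 ≤ ε) (hαβε : α ≤ β - ε) (hβε : β ∈ Icc (a + ε) b)
    (hc : 0 < c) (hgap : ∀ v ∈ Icc (a + ε) b, c ≤ f v - f (v - ε))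
    (hfA : f A = ∫ x, f x ∂mu) (hclose : f β - f A < c / 2) :
    (mu (Icc α (β - ε))).toReal < 1 / 2 := by
  have hαβ : α ≤ β := by linarith
  have hsub : Icc α β ⊆ Icc a b := Icc_subset_Icc haα hβb
  obtain ⟨F, hFc, hFeq, hFint⟩ := clamp_facts' hab hf
  have hint : Integrable F mu := hFint mu inferInstance
  have hae : ∀ᵐ x ∂mu, x ∈ Icc α β := by rw [ae_iff]; exact hnull
  have h1 : f A = ∫ x, F x ∂mu := by
    rw [hfA]
    exact integral_congr_ae (hae.mono fun x hx => (hFeq x (hsub hx)).symm)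
  set S := Icc α (β - ε) with hS
  have hSsub : S ⊆ Icc a b := Icc_subset_Icc haα (by linarith)
  have hβεab : β - ε ∈ Icc a b := ⟨by linarith, by linarith⟩
  have hβab : β ∈ Icc a b := ⟨by linarith, hβb⟩
  have hptS : ∀ x ∈ S, c ≤ f β - F x := by
    intro x hx
    rw [hFeq x (hSsub hx)]
    have h2 : f x ≤ f (β - ε) := hfm.monotoneOn (hSsub hx) hβεab hx.2
    have h3 : c ≤ f β - f (β - ε) := hgap β hβε
    linarith
  have e1 : (mu S).toReal * c ≤ ∫ x in S, (f β - F x) ∂mu := by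
    have := setIntegral_mono_on (f := fun _ => c) (g := fun x => f β - F x)
      ((integrable_const c).integrableOn)
      (((integrable_const (f β)).sub hint).integrableOn) measurableSet_Icc hptS
    rwa [setIntegral_const, smul_eq_mul] at this
  have e2 : ∫ x in S, (f β - F x) ∂mu ≤ ∫ x, (f β - F x) ∂mu := by
    apply setIntegral_le_integral ((integrable_const (f β)).sub hint)
    filter_upwards [hae] with x hx
    have : F x ≤ f β := by
      rw [hFeq x (hsub hx)]
      exact hfm.monotoneOn (hsub hx) hβab hx.2
    simp only [Pi.zero_apply, Pi.sub_apply]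
    linarith
  have e3 : ∫ x, (f β - F x) ∂mu = f β - f A := by
    rw [integral_sub (integrable_const _) hint, integral_const, h1]
    simp [measure_univ]
  have final : (mu S).toReal * c < c / 2 := by
    calc (mu S).toReal * c ≤ ∫ x in S, (f β - F x) ∂mu := e1
    _ ≤ ∫ x, (f β - F x) ∂mu := e2
    _ = f β - f A := e3
    _ < c / 2 := hclose
  nlinarith [ENNReal.toReal_nonneg (a := mu S)]

lemma bot_mass {a b α β ε c B : ℝ} (hab : a ≤ b) {g : ℝ → ℝ}
    (hg : ContinuousOn g (Icc a b)) (hgm : StrictMonoOn g (Icc a b))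
    (mu : Measure ℝ) [IsProbabilityMeasure mu]
    (hnull : mu (Icc α β)ᶜ = 0) (haα : a ≤ α) (hβb : β ≤ b)
    (hε0 : 0 ≤ ε) (hαβε : α + ε ≤ β) (hαε : α + ε ∈ Icc (a + ε) b)
    (hc : 0 < c) (hgap : ∀ v ∈ Icc (a + ε) b, c ≤ g v - g (v - ε))
    (hgB : g B = ∫ x, g x ∂mu) (hclose : g B - g α < c / 2) :
    (mu (Icc (α + ε) β)).toReal < 1 / 2 := by
  have hαβ : α ≤ β := by linarith
  have hsub : Icc α β ⊆ Icc a b := Icc_subset_Icc haα hβb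
  obtain ⟨G, hGc, hGeq, hGint⟩ := clamp_facts' hab hg
  have hint : Integrable G mu := hGint mu inferInstance
  have hae : ∀ᵐ x ∂mu, x ∈ Icc α β := by rw [ae_iff]; exact hnull
  have h1 : g B = ∫ x, G x ∂mu := by
    rw [hgB]
    exact integral_congr_ae (hae.mono fun x hx => (hGeq x (hsub hx)).symm)
  set S := Icc (α + ε) β with hS
  have hSsub : S ⊆ Icc a b := Icc_subset_Icc (by linarith) hβb
  have hαεab : α + ε ∈ Icc a b := ⟨by linarith, hαε.2⟩
  have hαab : α ∈ Icc a b := ⟨haα, by linarith⟩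
  have hptS : ∀ x ∈ S, c ≤ G x - g α := by
    intro x hx
    rw [hGeq x (hSsub hx)]
    have h2 : g (α + ε) ≤ g x := hgm.monotoneOn hαεab (hSsub hx) hx.1
    have h3 : c ≤ g (α + ε) - g ((α + ε) - ε) := hgap (α + ε) hαε
    have h4 : α + ε - ε = α := by ring
    rw [h4] at h3
    linarith
  have e1 : (mu S).toReal * c ≤ ∫ x in S, (G x - g α) ∂mu := by
    have := setIntegral_mono_on (f := fun _ => c) (g := fun x => G x - g α)
      ((integrable_const c).integrableOn)
      ((hint.sub (integrable_const (g α))).integrableOn) measurableSet_Icc hptS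
    rwa [setIntegral_const, smul_eq_mul] at this
  have e2 : ∫ x in S, (G x - g α) ∂mu ≤ ∫ x, (G x - g α) ∂mu := by
    apply setIntegral_le_integral (hint.sub (integrable_const (g α)))
    filter_upwards [hae] with x hx
    have : g α ≤ G x := by
      rw [hGeq x (hsub hx)]
      exact hgm.monotoneOn hαab (hsub hx) hx.1
    simp only [Pi.zero_apply, Pi.sub_apply]
    linarith
  have e3 : ∫ x, (G x - g α) ∂mu = g B - g α := by
    rw [integral_sub hint (integrable_const _), integral_const, h1]
    simp [measure_univ]
  have final : (mu S).toReal * c < c / 2 := by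
    calc (mu S).toReal * c ≤ ∫ x in S, (G x - g α) ∂mu := e1
    _ ≤ ∫ x, (G x - g α) ∂mu := e2
    _ = g B - g α := e3
    _ < c / 2 := hclose
  nlinarith [ENNReal.toReal_nonneg (a := mu S)]

lemma key (a b : ℝ) (hab : a < b) (f g : ℝ → ℝ)
    (hf : ContinuousOn f (Icc a b)) (hfm : StrictMonoOn f (Icc a b))
    (hg : ContinuousOn g (Icc a b)) (hgm : StrictMonoOn g (Icc a b))
    (t : ℝ) (ht0 : 0 < t) (ht1 : t ≤ b - a) :
    ∃ δ, 0 < δ ∧ δ < t ∧ ∀ (mu : Measure ℝ), IsProbabilityMeasure mu →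
      ∀ α β A B : ℝ, a ≤ α → β ≤ b → α ≤ β → β - α ≤ t → mu (Icc α β)ᶜ = 0 →
      A ∈ Icc α β → B ∈ Icc α β → f A = ∫ x, f x ∂mu → g B = ∫ x, g x ∂mu →
      A - B ≤ t - δ := by
  set ε := t / 6 with hεdef
  have hε : 0 < ε := by positivity
  have haεb : a + ε ≤ b := by linarith
  obtain ⟨cf, hcf0, hcf⟩ := gap_const hε haεb hf hfm
  obtain ⟨cg, hcg0, hcg⟩ := gap_const hε haεb hg hgm
  obtain ⟨δ₁, hδ₁, hucf⟩ := ucont_const hf (c := cf / 2) (by positivity)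
  obtain ⟨δ₂, hδ₂, hucg⟩ := ucont_const hg (c := cg / 2) (by positivity)
  set δ := min (min δ₁ δ₂) (t / 2) / 2 with hδdef
  have hδ0 : 0 < δ := by positivity
  have hδδ₁ : δ < δ₁ := by
    have h1 : min (min δ₁ δ₂) (t / 2) ≤ δ₁ := le_trans (min_le_left _ _) (min_le_left _ _)
    have h2 : 0 < min (min δ₁ δ₂) (t / 2) := lt_min (lt_min hδ₁ hδ₂) (by positivity)
    rw [hδdef]; linarith
  have hδδ₂ : δ < δ₂ := by
    have h1 : min (min δ₁ δ₂) (t / 2) ≤ δ₂ := le_trans (min_le_left _ _) (min_le_right _ _)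
    have h2 : 0 < min (min δ₁ δ₂) (t / 2) := lt_min (lt_min hδ₁ hδ₂) (by positivity)
    rw [hδdef]; linarith
  have hδt4 : δ ≤ t / 4 := by
    have h1 : min (min δ₁ δ₂) (t / 2) ≤ t / 2 := min_le_right _ _
    rw [hδdef]; linarith
  have hδt : δ < t := by linarith
  refine ⟨δ, hδ0, hδt, ?_⟩
  intro mu hinst α β A B haα hβb hαβ hst hnull hA hB hfA hgB
  haveI := hinst
  by_contra hcon
  push_neg at hcon
  have hs1 : t - δ < β - α := by
    have := hA.2; have := hB.1; linarith
  have hAβδ : β - δ < A := by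
    have := hB.1; linarith
  have hBαδ : B < α + δ := by
    have := hA.2; linarith
  have hαβε : α ≤ β - ε := by rw [hεdef] at *; linarith
  have hβmem : β ∈ Icc (a + ε) b := ⟨by linarith, hβb⟩
  have hαεmem : α + ε ∈ Icc (a + ε) b := ⟨by linarith, by linarith⟩
  -- f close at top
  have hβab : β ∈ Icc a b := ⟨by linarith, hβb⟩
  have hβδab : β - δ ∈ Icc a b := ⟨by linarith, by linarith⟩
  have hAab : A ∈ Icc a b := ⟨by linarith [hA.1], by linarith [hA.2]⟩
  have hBab : B ∈ Icc a b := ⟨by linarith [hB.1], by linarith [hB.2]⟩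
  have hαab : α ∈ Icc a b := ⟨haα, by linarith⟩
  have hαδab : α + δ ∈ Icc a b := ⟨by linarith, by linarith⟩
  have hclose_f : f β - f A < cf / 2 := by
    have h1 : f (β - δ) ≤ f A := hfm.monotoneOn hβδab hAab (by linarith)
    have h2 : dist (f β) (f (β - δ)) < cf / 2 := by
      apply hucf β hβab (β - δ) hβδab
      rw [Real.dist_eq]
      rw [abs_of_nonneg (by linarith)]
      linarith
    rw [Real.dist_eq] at h2
    have := abs_lt.1 h2
    linarith [this.1, this.2]
  have hclose_g : g B - g α < cg / 2 := by
    have h1 : g B ≤ g (α + δ) := hgm.monotoneOn hBab hαδab (by linarith)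
    have h2 : dist (g (α + δ)) (g α) < cg / 2 := by
      apply hucg (α + δ) hαδab α hαab
      rw [Real.dist_eq, abs_of_nonneg (by linarith)]
      linarith
    rw [Real.dist_eq] at h2
    have := abs_lt.1 h2
    linarith [this.1, this.2]
  have top := top_mass (le_of_lt hab) hf hfm mu hnull haα hβb hε.le hαβε hβmem hcf0 hcf hfA hclose_f
  have bot := bot_mass (le_of_lt hab) hg hgm mu hnull haα hβb hε.le (by linarith) hαεmem hcg0 hcg hgB hclose_g
  -- cover
  have h1 : mu (Icc α β) = 1 := by
    have h := measure_add_measure_compl (μ := mu) (measurableSet_Icc (a := α) (b := β))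
    rw [hnull, add_zero, measure_univ] at h
    exact h
  have hcov : Icc α β ⊆ Icc α (β - ε) ∪ Icc (α + ε) β := by
    intro x hx
    rcases le_or_gt x (β - ε) with h | h
    · exact Or.inl ⟨hx.1, h⟩
    · refine Or.inr ⟨?_, hx.2⟩
      rw [hεdef] at *
      linarith
  have h2 : (1 : ENNReal) ≤ mu (Icc α (β - ε)) + mu (Icc (α + ε) β) :=
    h1 ▸ le_trans (measure_mono hcov) (measure_union_le _ _)
  have h3 : (1 : ℝ) ≤ (mu (Icc α (β - ε))).toReal + (mu (Icc (α + ε) β)).toReal := by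
    have hne1 : mu (Icc α (β - ε)) ≠ ⊤ := measure_ne_top mu _
    have hne2 : mu (Icc (α + ε) β) ≠ ⊤ := measure_ne_top mu _
    have := ENNReal.toReal_mono (by simp [hne1, hne2]) h2
    rwa [ENNReal.toReal_one, ENNReal.toReal_add hne1 hne2] at this
  linarith

lemma mean_char {a b : ℝ} (hab : a ≤ b) {f : ℝ → ℝ} (hf : ContinuousOn f (Icc a b))
    (hm : StrictMonoOn f (Icc a b) ∨ StrictAntiOn f (Icc a b))
    (mu : Measure ℝ) [IsProbabilityMeasure mu] {α β : ℝ} (hαβ : α ≤ β)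
    (haα : a ≤ α) (hβb : β ≤ b) (hnull : mu (Icc α β)ᶜ = 0) :
    QAM f (Icc a b) mu ∈ Icc α β ∧ f (QAM f (Icc a b) mu) = ∫ t, f t ∂mu := by
  have hsub : Icc α β ⊆ Icc a b := Icc_subset_Icc haα hβb
  obtain ⟨F, hFc, hFeq, hFint⟩ := clamp_facts' hab hf
  have hint : Integrable F mu := hFint mu inferInstance
  have hae : ∀ᵐ x ∂mu, x ∈ Icc α β := by
    rw [ae_iff]
    exact hnull
  have haef : f =ᵐ[mu] F := hae.mono fun x hx => (hFeq x (hsub hx)).symm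
  have h1 : ∫ t, f t ∂mu = ∫ t, F t ∂mu := integral_congr_ae haef
  have hαmem : α ∈ Icc a b := ⟨haα, le_trans hαβ hβb⟩
  have hβmem : β ∈ Icc a b := ⟨le_trans haα hαβ, hβb⟩
  have hptw : ∀ x ∈ Icc α β, f x ∈ Icc (min (f α) (f β)) (max (f α) (f β)) := by
    intro x hx
    have hxab : x ∈ Icc a b := hsub hx
    rcases hm with hm | hm
    · exact ⟨le_trans (min_le_left _ _) (hm.monotoneOn hαmem hxab hx.1),
        le_trans (hm.monotoneOn hxab hβmem hx.2) (le_max_right _ _)⟩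
    · exact ⟨le_trans (min_le_right _ _) (hm.antitoneOn hxab hβmem hx.2),
        le_trans (hm.antitoneOn hαmem hxab hx.1) (le_max_left _ _)⟩
  have hFptw : ∀ᵐ x ∂mu, F x ∈ Icc (min (f α) (f β)) (max (f α) (f β)) := by
    filter_upwards [hae] with x hx
    rw [hFeq x (hsub hx)]
    exact hptw x hx
  have hylo : min (f α) (f β) ≤ ∫ t, F t ∂mu := by
    have := integral_mono_ae (integrable_const _) hint (hFptw.mono fun x hx => hx.1)
    simpa using this
  have hyhi : (∫ t, F t ∂mu) ≤ max (f α) (f β) := by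
    have := integral_mono_ae hint (integrable_const _) (hFptw.mono fun x hx => hx.2)
    simpa using this
  have hy : (∫ t, f t ∂mu) ∈ uIcc (f α) (f β) := by
    rw [h1, uIcc]
    exact ⟨by simpa using hylo, by simpa using hyhi⟩
  have hivt : uIcc (f α) (f β) ⊆ f '' Icc α β := by
    have := intermediate_value_uIcc (f := f) (a := α) (b := β)
      (hf.mono (by rw [uIcc_of_le hαβ]; exact hsub))
    rwa [uIcc_of_le hαβ] at this
  obtain ⟨x, hx, hfx⟩ := hivt hy
  have hex : ∃ z ∈ Icc a b, f z = ∫ t, f t ∂mu := ⟨x, hsub hx, hfx⟩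
  have hA1 : QAM f (Icc a b) mu ∈ Icc a b := Function.invFunOn_mem hex
  have hA2 : f (QAM f (Icc a b) mu) = ∫ t, f t ∂mu := Function.invFunOn_eq hex
  have hinj : InjOn f (Icc a b) := by
    rcases hm with hm | hm
    · exact hm.injOn
    · exact hm.injOn
  have : QAM f (Icc a b) mu = x := hinj hA1 (hsub hx) (hA2.trans hfx.symm)
  exact ⟨this ▸ hx, hA2⟩


lemma monotone_version {a b : ℝ} {f : ℝ → ℝ} (hf : CM f (Icc a b)) :
    ∃ f₁ : ℝ → ℝ, ContinuousOn f₁ (Icc a b) ∧ StrictMonoOn f₁ (Icc a b) ∧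
      ∀ (mu : Measure ℝ) (A : ℝ), f A = ∫ x, f x ∂mu → f₁ A = ∫ x, f₁ x ∂mu := by
  obtain ⟨hfc, hm | hm⟩ := hf
  · exact ⟨f, hfc, hm, fun mu A h => h⟩
  · refine ⟨fun x => -(f x), hfc.neg, fun x hx y hy hxy => by
      simpa using neg_lt_neg (hm hx hy hxy), ?_⟩
    intro mu A h
    rw [integral_neg]
    simp [h]


theorem stmt0 (a b : ℝ) (hab : a < b) (f g : ℝ → ℝ)
    (hf : CM f (Icc a b)) (hg : CM g (Icc a b))
    (t : ℝ) (ht0 : 0 < t) (ht1 : t ≤ b - a) :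
    sSup {d : ℝ | ∃ mu : Measure ℝ, IsCSP (Icc a b) mu ∧ gammaLen mu ≤ t ∧
        d = |QAM f (Icc a b) mu - QAM g (Icc a b) mu|} < t := by
  obtain ⟨f₁, hf₁c, hf₁m, hf₁rel⟩ := monotone_version hf
  obtain ⟨g₁, hg₁c, hg₁m, hg₁rel⟩ := monotone_version hg
  obtain ⟨δ₁, hδ₁0, hδ₁t, hkey₁⟩ := key a b hab f₁ g₁ hf₁c hf₁m hg₁c hg₁m t ht0 ht1
  obtain ⟨δ₂, hδ₂0, hδ₂t, hkey₂⟩ := key a b hab g₁ f₁ hg₁c hg₁m hf₁c hf₁m t ht0 ht1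
  set δ₀ := min δ₁ δ₂ with hδ₀def
  have hδ₀0 : 0 < δ₀ := lt_min hδ₁0 hδ₂0
  have hδ₀t : δ₀ < t := lt_of_le_of_lt (min_le_left _ _) hδ₁t
  have hbound : ∀ d ∈ {d : ℝ | ∃ mu : Measure ℝ, IsCSP (Icc a b) mu ∧ gammaLen mu ≤ t ∧
      d = |QAM f (Icc a b) mu - QAM g (Icc a b) mu|}, d ≤ t - δ₀ := by
    rintro d ⟨mu, ⟨hprob, hnullI, _⟩, hlen, rfl⟩
    haveI := hprob
    have hsub : msupp mu ⊆ Icc a b := msupp_subset_of_null isClosed_Icc hnullI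
    have hne : (msupp mu).Nonempty := msupp_nonempty mu
    have hbdd : BddBelow (msupp mu) := ⟨a, fun x hx => (hsub hx).1⟩
    have hbdd' : BddAbove (msupp mu) := ⟨b, fun x hx => (hsub hx).2⟩
    set α := suppInf mu with hα
    set β := suppSup mu with hβ
    have haα : a ≤ α := le_csInf hne fun x hx => (hsub hx).1
    have hβb : β ≤ b := csSup_le hne fun x hx => (hsub hx).2
    have hαβ : α ≤ β := csInf_le_csSup hne hbdd hbdd'
    have hnull : mu (Icc α β)ᶜ = 0 := by
      apply measure_mono_null _ (msupp_compl_null mu)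
      rw [compl_subset_compl]
      exact fun x hx => ⟨csInf_le hbdd hx, le_csSup hbdd' hx⟩
    have hst : β - α ≤ t := hlen
    obtain ⟨hAmem, hAval⟩ := mean_char hab.le hf.1 hf.2 mu hαβ haα hβb hnull
    obtain ⟨hBmem, hBval⟩ := mean_char hab.le hg.1 hg.2 mu hαβ haα hβb hnull
    have hA1 := hf₁rel mu _ hAval
    have hB1 := hg₁rel mu _ hBval
    have h1 := hkey₁ mu inferInstance α β _ _ haα hβb hαβ hst hnull hAmem hBmem hA1 hB1
    have h2 := hkey₂ mu inferInstance α β _ _ haα hβb hαβ hst hnull hBmem hAmem hB1 hA1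
    rw [abs_sub_le_iff]
    constructor
    · calc QAM f (Icc a b) mu - QAM g (Icc a b) mu ≤ t - δ₁ := h1
        _ ≤ t - δ₀ := by have := min_le_left δ₁ δ₂; linarith
    · calc QAM g (Icc a b) mu - QAM f (Icc a b) mu ≤ t - δ₂ := h2
        _ ≤ t - δ₀ := by have := min_le_right δ₁ δ₂; linarith
  calc sSup {d : ℝ | ∃ mu : Measure ℝ, IsCSP (Icc a b) mu ∧ gammaLen mu ≤ t ∧
        d = |QAM f (Icc a b) mu - QAM g (Icc a b) mu|} ≤ t - δ₀ :=
      Real.sSup_le hbound (by linarith)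
    _ < t := by linarith
end
end

section
/- Let $I$ be an interval, $(f_x)_{x\in[0,1]}$ a family of continuous strictly monotone functions $f_x : I \to \mathbb{R}$ such that the map $(t,x) \mapsto f_x(t)$ is measurable with respect to the product of the Borel $\sigma$-algebra on $I$ and the Lebesgue $\sigma$-algebra on $[0,1]$. Then for every compactly supported Borel probability measure $\mathbb{P}$ on $I$, the function $x \mapsto \mathscr{A}_{f_x}(\mathbb{P})$ is Lebesgue measurable on $[0,1]$. -/
open MeasureTheory Set Filter Topology

noncomputable section

set_option maxHeartbeats 1000000 in
theorem stmt5 (I : Set ℝ) (hI : I.OrdConnected) (F : ℝ → ℝ → ℝ)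
    (hF : Admissible F I) (mu : Measure ℝ) (hmu : IsCSP I mu) :
    Measurable[Leb.comap (Subtype.val : (Icc (0:ℝ) 1) → ℝ)]
      (fun x : Icc (0:ℝ) 1 => QAM (F x.1) I mu) := by
  classical
  haveI : IsProbabilityMeasure mu := hmu.1
  set h : ℝ → ℝ := fun x => ∫ t, F x t ∂mu with hh_def
  have hprod : Measurable[(inferInstance : MeasurableSpace ℝ).prod Leb]
      (fun p : ℝ × ℝ => F p.2 p.1) := hF.2
  have hh : Measurable[Leb] h :=
    (@MeasureTheory.StronglyMeasurable.integral_prod_left' ℝ ℝ ℝ _ Leb mu _ _ _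
      (fun p => F p.2 p.1) hprod.stronglyMeasurable).measurable
  have hFd : ∀ d : ℝ, Measurable[Leb] (fun x => F x d) := fun d =>
    hprod.comp (@measurable_prodMk_left ℝ ℝ _ Leb d)
  -- the countable "test set" D ⊆ I
  set D : Set ℝ := (I ∩ Set.range ((↑) : ℚ → ℝ)) ∪ {a | IsGreatest I a} ∪ {a | IsLeast I a}
    with hD_def
  have hDI : D ⊆ I := by
    rintro d ((⟨hd, -⟩ | hd) | hd)
    · exact hd
    · exact hd.1
    · exact hd.1
  have hDcount : D.Countable := by
    refine ((Set.Countable.mono inter_subset_right (Set.countable_range _)).union ?_).union ?_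
    · exact Set.Subsingleton.countable (fun a ha b hb => ha.unique hb)
    · exact Set.Subsingleton.countable (fun a ha b hb => ha.unique hb)
  have hDbtwn : ∀ a b c' : ℝ, a ∈ I → b ∈ I → a < b → a < c' →
      ∃ d ∈ D, a < d ∧ d < b ∧ d < c' := by
    intro a b c' ha hb hab hac
    obtain ⟨q, hq1, hq2⟩ := exists_rat_btwn (lt_min hab hac)
    have hdb : (q : ℝ) < b := hq2.trans_le (min_le_left _ _)
    have hdc : (q : ℝ) < c' := hq2.trans_le (min_le_right _ _)
    have hdI : (q : ℝ) ∈ I := hI.out ha hb ⟨hq1.le, hdb.le⟩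
    exact ⟨q, Or.inl (Or.inl ⟨hdI, ⟨q, rfl⟩⟩), hq1, hdb, hdc⟩
  have hDup : ∀ a, a ∈ I → a ∉ D → ∃ b ∈ I, a < b := by
    intro a ha haD
    by_contra hcon
    push_neg at hcon
    exact haD (Or.inl (Or.inr ⟨ha, fun b hb => hcon b hb⟩))
  have hDdown : ∀ a, a ∈ I → a ∉ D → ∃ b ∈ I, b < a := by
    intro a ha haD
    by_contra hcon
    push_neg at hcon
    exact haD (Or.inr ⟨ha, fun b hb => hcon b hb⟩)
  -- the "good" set where the mean is honestly defined
  set Good : Set ℝ := {x | (∃ d ∈ D, F x d ≤ h x) ∧ ∃ d ∈ D, h x ≤ F x d} with hGood_def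
  have hGoodIff : ∀ x ∈ Icc (0:ℝ) 1, (x ∈ Good ↔ ∃ a ∈ I, F x a = h x) := by
    intro x hx
    constructor
    · rintro ⟨⟨d₁, hd₁D, hd₁⟩, d₂, hd₂D, hd₂⟩
      have hsub : uIcc d₁ d₂ ⊆ I := hI.uIcc_subset (hDI hd₁D) (hDI hd₂D)
      have hcont : ContinuousOn (F x) (uIcc d₁ d₂) := (hF.1 x hx).1.mono hsub
      have hmem : h x ∈ uIcc (F x d₁) (F x d₂) := mem_uIcc.mpr (Or.inl ⟨hd₁, hd₂⟩)
      obtain ⟨a, haI, ha⟩ := intermediate_value_uIcc hcont hmem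
      exact ⟨a, hsub haI, ha⟩
    · rintro ⟨a, haI, ha⟩
      by_cases haD : a ∈ D
      · exact ⟨⟨a, haD, ha.le⟩, ⟨a, haD, ha.ge⟩⟩
      · obtain ⟨b, hbI, hab⟩ := hDup a haI haD
        obtain ⟨b', hb'I, hb'a⟩ := hDdown a haI haD
        obtain ⟨d₁, hd₁D, -, hd₁a, -⟩ := hDbtwn b' a a hb'I haI hb'a hb'a
        obtain ⟨d₂, hd₂D, had₂, -, -⟩ := hDbtwn a b b haI hbI hab hab
        rcases (hF.1 x hx).2 with hm | hanti
        · exact ⟨⟨d₁, hd₁D, ha ▸ (hm (hDI hd₁D) haI hd₁a).le⟩,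
                 ⟨d₂, hd₂D, ha ▸ (hm haI (hDI hd₂D) had₂).le⟩⟩
        · exact ⟨⟨d₂, hd₂D, ha ▸ (hanti haI (hDI hd₂D) had₂).le⟩,
                 ⟨d₁, hd₁D, ha ▸ (hanti (hDI hd₁D) haI hd₁a).le⟩⟩
  -- value on the bad set
  set c₀ : ℝ := Classical.choice (inferInstance : Nonempty ℝ) with hc₀_def
  have hbad : ∀ x : ℝ, ¬(∃ a ∈ I, F x a = h x) → QAM (F x) I mu = c₀ := by
    intro x hx
    exact Function.invFunOn_neg hx
  -- key characterization of sublevel sets on the good set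
  have hkey : ∀ (c : ℝ), ∀ x ∈ Icc (0:ℝ) 1, ∀ _ : ∃ a ∈ I, F x a = h x,
      (StrictMonoOn (F x) I → (QAM (F x) I mu < c ↔ ∃ d ∈ D, d < c ∧ h x ≤ F x d)) ∧
      (StrictAntiOn (F x) I → (QAM (F x) I mu < c ↔ ∃ d ∈ D, d < c ∧ F x d ≤ h x)) := by
    intro c x hx hg
    have haI : QAM (F x) I mu ∈ I := Function.invFunOn_mem hg
    have hFa : F x (QAM (F x) I mu) = h x := Function.invFunOn_eq hg
    set a := QAM (F x) I mu
    constructor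
    · intro hm
      constructor
      · intro hac
        by_cases haD : a ∈ D
        · exact ⟨a, haD, hac, hFa.ge⟩
        · obtain ⟨b, hbI, hab⟩ := hDup a haI haD
          obtain ⟨d, hdD, had, -, hdc⟩ := hDbtwn a b c haI hbI hab hac
          exact ⟨d, hdD, hdc, hFa ▸ (hm haI (hDI hdD) had).le⟩
      · rintro ⟨d, hdD, hdc, hyd⟩
        have had : a ≤ d := by
          by_contra hcon
          push_neg at hcon
          exact absurd (hFa ▸ hyd) (not_le.mpr (hm (hDI hdD) haI hcon))
        exact lt_of_le_of_lt had hdc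
    · intro hanti
      constructor
      · intro hac
        by_cases haD : a ∈ D
        · exact ⟨a, haD, hac, hFa.le⟩
        · obtain ⟨b, hbI, hab⟩ := hDup a haI haD
          obtain ⟨d, hdD, had, -, hdc⟩ := hDbtwn a b c haI hbI hab hac
          exact ⟨d, hdD, hdc, hFa ▸ (hanti haI (hDI hdD) had).le⟩
      · rintro ⟨d, hdD, hdc, hyd⟩
        have had : a ≤ d := by
          by_contra hcon
          push_neg at hcon
          exact absurd (hFa ▸ hyd) (not_le.mpr (hanti (hDI hdD) haI hcon))
        exact lt_of_le_of_lt had hdc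
  -- monotone / antitone splitting set
  obtain ⟨Inc, hIncMeas, hIncMono, hIncAnti⟩ :
      ∃ Inc : Set ℝ, MeasurableSet[Leb] Inc ∧
        (∀ x ∈ Icc (0:ℝ) 1, x ∈ Inc → StrictMonoOn (F x) I) ∧
        (∀ x ∈ Icc (0:ℝ) 1, x ∉ Inc → StrictAntiOn (F x) I) := by
    by_cases hpair : ∃ t₁ ∈ I, ∃ t₂ ∈ I, t₁ < t₂
    · obtain ⟨t₁, ht₁, t₂, ht₂, hlt⟩ := hpair
      refine ⟨{x | F x t₁ < F x t₂}, measurableSet_lt (hFd t₁) (hFd t₂), ?_, ?_⟩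
      · intro x hx hxI
        rcases (hF.1 x hx).2 with hm | hanti
        · exact hm
        · exact absurd hxI (not_lt.mpr (hanti ht₁ ht₂ hlt).le)
      · intro x hx hxI
        rcases (hF.1 x hx).2 with hm | hanti
        · exact absurd (hm ht₁ ht₂ hlt) hxI
        · exact hanti
    · refine ⟨∅, @MeasurableSet.empty ℝ Leb, fun x _ hxI => absurd hxI (notMem_empty x), ?_⟩
      intro x _ _ t ht u hu htu
      exact absurd ⟨t, ht, u, hu, htu⟩ hpair
  -- assemble measurability of Good
  have hGoodMeas : MeasurableSet[Leb] Good := by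
    have h1 : MeasurableSet[Leb] {x : ℝ | ∃ d ∈ D, F x d ≤ h x} := by
      have : {x : ℝ | ∃ d ∈ D, F x d ≤ h x} = ⋃ d ∈ D, {x : ℝ | F x d ≤ h x} := by
        ext x; simp only [mem_setOf_eq, mem_iUnion, exists_prop]
      rw [this]
      exact MeasurableSet.biUnion hDcount (fun d _ => measurableSet_le (hFd d) hh)
    have h2 : MeasurableSet[Leb] {x : ℝ | ∃ d ∈ D, h x ≤ F x d} := by
      have : {x : ℝ | ∃ d ∈ D, h x ≤ F x d} = ⋃ d ∈ D, {x : ℝ | h x ≤ F x d} := by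
        ext x; simp only [mem_setOf_eq, mem_iUnion, exists_prop]
      rw [this]
      exact MeasurableSet.biUnion hDcount (fun d _ => measurableSet_le hh (hFd d))
    have : Good = {x : ℝ | ∃ d ∈ D, F x d ≤ h x} ∩ {x : ℝ | ∃ d ∈ D, h x ≤ F x d} := by
      ext x; simp [hGood_def, mem_setOf_eq, mem_inter_iff]
    rw [this]
    exact h1.inter h2
  -- the globalized function
  set A : Set ℝ := Icc (0:ℝ) 1 with hA_def
  have hAmeas : MeasurableSet[Leb] A := measurableSet_Icc.nullMeasurableSet
  set φ : ℝ → ℝ := fun x => if x ∈ A then QAM (F x) I mu else c₀ with hφ_def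
  have hφ : Measurable[Leb] φ := by
    apply measurable_of_Iio
    intro c
    have hSinc : MeasurableSet[Leb] {x : ℝ | ∃ d ∈ D, d < c ∧ h x ≤ F x d} := by
      have : {x : ℝ | ∃ d ∈ D, d < c ∧ h x ≤ F x d}
          = ⋃ d ∈ D, {x : ℝ | d < c ∧ h x ≤ F x d} := by
        ext x; simp only [mem_setOf_eq, mem_iUnion, exists_prop]
      rw [this]
      refine MeasurableSet.biUnion hDcount (fun d _ => ?_)
      by_cases hdc : d < c
      · simpa [hdc] using measurableSet_le hh (hFd d)
      · simpa [hdc] using (MeasurableSet.empty : MeasurableSet[Leb] (∅ : Set ℝ))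
    have hSdec : MeasurableSet[Leb] {x : ℝ | ∃ d ∈ D, d < c ∧ F x d ≤ h x} := by
      have : {x : ℝ | ∃ d ∈ D, d < c ∧ F x d ≤ h x}
          = ⋃ d ∈ D, {x : ℝ | d < c ∧ F x d ≤ h x} := by
        ext x; simp only [mem_setOf_eq, mem_iUnion, exists_prop]
      rw [this]
      refine MeasurableSet.biUnion hDcount (fun d _ => ?_)
      by_cases hdc : d < c
      · simpa [hdc] using measurableSet_le (hFd d) hh
      · simpa [hdc] using (MeasurableSet.empty : MeasurableSet[Leb] (∅ : Set ℝ))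
    have hset : φ ⁻¹' Iio c =
        (A ∩ Good ∩ Inc ∩ {x : ℝ | ∃ d ∈ D, d < c ∧ h x ≤ F x d}) ∪
        (A ∩ Good ∩ Incᶜ ∩ {x : ℝ | ∃ d ∈ D, d < c ∧ F x d ≤ h x}) ∪
        (((A ∩ Goodᶜ) ∪ Aᶜ) ∩ (if c₀ < c then univ else ∅)) := by
      ext x
      simp only [mem_preimage, mem_Iio, mem_union, mem_inter_iff, mem_compl_iff, mem_setOf_eq]
      by_cases hxA : x ∈ A
      · have hφx : φ x = QAM (F x) I mu := if_pos hxA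
        rw [hφx]
        by_cases hxG : x ∈ Good
        · have hg := (hGoodIff x hxA).mp hxG
          by_cases hxI : x ∈ Inc
          · rw [(hkey c x hxA hg).1 (hIncMono x hxA hxI)]
            by_cases hc : c₀ < c <;> simp [hc, hxA, hxG, hxI] <;> tauto
          · rw [(hkey c x hxA hg).2 (hIncAnti x hxA hxI)]
            by_cases hc : c₀ < c <;> simp [hc, hxA, hxG, hxI] <;> tauto
        · have hQ : QAM (F x) I mu = c₀ :=
            hbad x (fun hg => hxG ((hGoodIff x hxA).mpr hg))
          rw [hQ]
          by_cases hc : c₀ < c <;> simp [hc, hxA, hxG] <;> tauto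
      · have hφx : φ x = c₀ := if_neg hxA
        rw [hφx]
        by_cases hc : c₀ < c <;> simp [hc, hxA] <;> tauto
    rw [hset]
    have hC : MeasurableSet[Leb] (if c₀ < c then (univ : Set ℝ) else ∅) := by
      split_ifs
      · exact @MeasurableSet.univ ℝ Leb
      · exact @MeasurableSet.empty ℝ Leb
    exact ((((hAmeas.inter hGoodMeas).inter hIncMeas).inter hSinc).union
      ((((hAmeas.inter hGoodMeas).inter hIncMeas.compl).inter hSdec))).union
        (((hAmeas.inter hGoodMeas.compl).union hAmeas.compl).inter hC)
  -- conclude via composition with the (measurable) inclusion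
  have hval : @Measurable (Icc (0:ℝ) 1) ℝ
      (Leb.comap (Subtype.val : (Icc (0:ℝ) 1) → ℝ)) Leb Subtype.val :=
    measurable_iff_comap_le.mpr le_rfl
  have hcomp := hφ.comp hval
  have heq : (fun x : Icc (0:ℝ) 1 => QAM (F x.1) I mu) = φ ∘ Subtype.val :=
    funext fun x => (if_pos x.2).symm
  rw [heq]
  exact hcomp
end
end

section
/- Let $I$ be a compact interval and $\mathcal{F} = (f_x)_{x\in[0,1]}$ an admissible family that contains only finitely many distinct functions. Then there exists a uniquely determined $\mathbf{A}_\mathcal{F}$-invariant mean $K_\mathcal{F} : \mathcal{P}(I) \to I$. -/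
open MeasureTheory Set Filter Topology

noncomputable section

namespace Stmt18


lemma not_mem_msupp {mu : Measure ℝ} {x : ℝ} (h : x ∉ msupp mu) :
    ∃ ε > 0, mu (Metric.ball x ε) = 0 := by
  simp only [msupp, mem_setOf_eq, not_forall] at h
  obtain ⟨ε, hε, h0⟩ := h
  exact ⟨ε, hε, by simpa using h0⟩

lemma msupp_closed (mu : Measure ℝ) : IsClosed (msupp mu) := by
  rw [← isOpen_compl_iff, Metric.isOpen_iff]
  intro x hx
  obtain ⟨ε, hε, h0⟩ := not_mem_msupp hx
  refine ⟨ε / 2, by linarith, fun y hy hymem => ?_⟩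
  have hsub : Metric.ball y (ε / 2) ⊆ Metric.ball x ε := by
    intro z hz
    rw [Metric.mem_ball] at *
    have := dist_triangle z y x
    linarith
  have h2 := hymem (ε / 2) (by linarith)
  have h3 : mu (Metric.ball y (ε / 2)) ≤ 0 := h0 ▸ measure_mono hsub
  exact absurd (le_antisymm h3 zero_le) (ne_of_gt h2)

lemma compl_msupp_null (mu : Measure ℝ) : mu (msupp mu)ᶜ = 0 := by
  refine measure_null_of_locally_null _ fun x hx => ?_
  obtain ⟨ε, hε, h0⟩ := not_mem_msupp hx
  exact ⟨Metric.ball x ε, mem_nhdsWithin_of_mem_nhds (Metric.ball_mem_nhds x hε), h0⟩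

lemma msupp_subset_of_closed {mu : Measure ℝ} {C : Set ℝ} (hC : IsClosed C)
    (h : mu Cᶜ = 0) : msupp mu ⊆ C := by
  intro x hx
  by_contra hxC
  obtain ⟨ε, hε, hsub⟩ := Metric.isOpen_iff.1 hC.isOpen_compl x hxC
  have := hx ε hε
  have h0 : mu (Metric.ball x ε) = 0 :=
    le_antisymm (h ▸ measure_mono hsub) zero_le
  simp [h0] at this

lemma msupp_nonempty (mu : Measure ℝ) [IsProbabilityMeasure mu] : (msupp mu).Nonempty := by
  by_contra h
  rw [not_nonempty_iff_eq_empty] at h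
  have := compl_msupp_null mu
  rw [h, compl_empty, measure_univ] at this
  exact one_ne_zero this

/-- Packaged facts about a CSP measure. -/
lemma csp_facts {a b : ℝ} {mu : Measure ℝ} (h : IsCSP (Icc a b) mu) :
    suppInf mu ∈ msupp mu ∧ suppSup mu ∈ msupp mu ∧
      msupp mu ⊆ Icc a b ∧ msupp mu ⊆ Icc (suppInf mu) (suppSup mu) ∧
      (∀ᵐ x ∂mu, x ∈ Icc (suppInf mu) (suppSup mu)) := by
  haveI := h.1
  have hsub : msupp mu ⊆ Icc a b := msupp_subset_of_closed isClosed_Icc h.2.1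
  have hne : (msupp mu).Nonempty := msupp_nonempty mu
  have hbb : BddBelow (msupp mu) := ⟨a, fun x hx => (hsub hx).1⟩
  have hba : BddAbove (msupp mu) := ⟨b, fun x hx => (hsub hx).2⟩
  have hinf : suppInf mu ∈ msupp mu := (msupp_closed mu).csInf_mem hne hbb
  have hsup : suppSup mu ∈ msupp mu := (msupp_closed mu).csSup_mem hne hba
  have hsub2 : msupp mu ⊆ Icc (suppInf mu) (suppSup mu) :=
    fun x hx => ⟨csInf_le hbb hx, le_csSup hba hx⟩
  refine ⟨hinf, hsup, hsub, hsub2, ?_⟩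
  have h0 : mu (Icc (suppInf mu) (suppSup mu))ᶜ = 0 :=
    le_antisymm (le_trans (measure_mono (compl_subset_compl.2 hsub2)) (compl_msupp_null mu).le)
      zero_le
  rw [ae_iff]
  exact h0

lemma csp_suppInf_le {a b : ℝ} {mu : Measure ℝ} (h : IsCSP (Icc a b) mu) :
    suppInf mu ≤ suppSup mu ∧ suppInf mu ∈ Icc a b ∧ suppSup mu ∈ Icc a b := by
  obtain ⟨h1, h2, h3, h4, _⟩ := csp_facts h
  exact ⟨(h4 h1).2, h3 h1, h3 h2⟩



/-- Truncation of `f` to `[a,b]`. -/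
def ftil (a b : ℝ) (hab : a ≤ b) (f : ℝ → ℝ) : ℝ → ℝ :=
  fun x => f ((projIcc a b hab x : Icc a b) : ℝ)

variable {a b : ℝ} (hab : a ≤ b) {f : ℝ → ℝ}

lemma ftil_continuous (hf : ContinuousOn f (Icc a b)) : Continuous (ftil a b hab f) :=
  hf.comp_continuous (continuous_subtype_val.comp (continuous_projIcc))
    (fun x => (projIcc a b hab x).2)

lemma ftil_eq_of_mem {x : ℝ} (hx : x ∈ Icc a b) : ftil a b hab f x = f x := by
  simp [ftil, projIcc_of_mem hab hx]

lemma ftil_bound (hf : ContinuousOn f (Icc a b)) :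
    ∃ C : ℝ, ∀ x, |ftil a b hab f x| ≤ C := by
  have hK : IsCompact (Icc a b) := isCompact_Icc
  obtain ⟨z, hz, hmax⟩ := hK.exists_isMaxOn ⟨a, left_mem_Icc.2 hab⟩
    ((continuous_abs.comp_continuousOn ((ftil_continuous hab hf).continuousOn)))
  rw [isMaxOn_iff] at hmax
  refine ⟨|ftil a b hab f z|, fun x => ?_⟩
  have : ((projIcc a b hab x : Icc a b) : ℝ) ∈ Icc a b := (projIcc a b hab x).2
  have h2 := hmax _ this
  simpa [ftil_eq_of_mem hab this, ftil] using h2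

lemma ftil_integrable (hf : ContinuousOn f (Icc a b)) (mu : Measure ℝ)
    [IsFiniteMeasure mu] : Integrable (ftil a b hab f) mu := by
  obtain ⟨C, hC⟩ := ftil_bound hab hf
  exact Integrable.mono' (integrable_const C)
    (ftil_continuous hab hf).aestronglyMeasurable
    (ae_of_all _ fun x => by simpa [Real.norm_eq_abs] using hC x)

lemma integral_ftil_eq {mu : Measure ℝ} (hmu : mu (Icc a b)ᶜ = 0) :
    ∫ t, f t ∂mu = ∫ t, ftil a b hab f t ∂mu := by
  refine integral_congr_ae ?_
  have hae : ∀ᵐ x ∂mu, x ∈ Icc a b := by rw [ae_iff]; exact hmu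
  exact hae.mono fun x hx => (ftil_eq_of_mem hab hx).symm

/-- Core strict integral bound. -/
lemma integral_lt_of_lt_on {mu : Measure ℝ} [IsProbabilityMeasure mu] {g : ℝ → ℝ}
    {K1 K2 : ℝ} {B : Set ℝ} (hB : MeasurableSet B) (hpos : mu B ≠ 0)
    (hint : Integrable g mu) (hae : ∀ᵐ x ∂mu, g x ≤ K2)
    (hon : ∀ x ∈ B, g x ≤ K1) (hK : K1 < K2) : ∫ x, g x ∂mu < K2 := by
  have hfin : mu B ≠ ⊤ := measure_ne_top mu B
  set m : ℝ := (mu B).toReal with hm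
  have hm0 : 0 < m := ENNReal.toReal_pos hpos hfin
  have hm1 : m ≤ 1 := by
    have h' : mu B ≤ 1 := prob_le_one
    calc m ≤ (1 : ENNReal).toReal := ENNReal.toReal_mono ENNReal.one_ne_top h'
    _ = 1 := by simp
  have hcompl : (mu Bᶜ).toReal = 1 - m := by
    rw [measure_compl hB hfin, measure_univ]
    rw [ENNReal.toReal_sub_of_le prob_le_one ENNReal.one_ne_top]
    simp [hm]
  have h1 : ∫ x in B, g x ∂mu ≤ K1 * m := by
    have := setIntegral_mono_on hint.integrableOn (integrableOn_const hfin) hB hon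
    calc ∫ x in B, g x ∂mu ≤ ∫ _ in B, K1 ∂mu := this
    _ = K1 * m := by rw [setIntegral_const, smul_eq_mul, measureReal_def, ← hm]; ring
  have h2 : ∫ x in Bᶜ, g x ∂mu ≤ K2 * (1 - m) := by
    have hae' : ∀ᵐ x ∂(mu.restrict Bᶜ), g x ≤ K2 := ae_restrict_of_ae hae
    have := integral_mono_ae (hint.restrict) (integrable_const K2) hae'
    calc ∫ x in Bᶜ, g x ∂mu ≤ ∫ _ in Bᶜ, K2 ∂mu := this
    _ = K2 * (1 - m) := by rw [setIntegral_const, measureReal_def, hcompl, smul_eq_mul]; ring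
  have h3 : ∫ x, g x ∂mu = ∫ x in B, g x ∂mu + ∫ x in Bᶜ, g x ∂mu :=
    (integral_add_compl hB hint).symm
  have : K1 * m + K2 * (1 - m) < K2 := by nlinarith
  linarith

lemma integral_gt_of_gt_on {mu : Measure ℝ} [IsProbabilityMeasure mu] {g : ℝ → ℝ}
    {K1 K2 : ℝ} {B : Set ℝ} (hB : MeasurableSet B) (hpos : mu B ≠ 0)
    (hint : Integrable g mu) (hae : ∀ᵐ x ∂mu, K2 ≤ g x)
    (hon : ∀ x ∈ B, K1 ≤ g x) (hK : K2 < K1) : K2 < ∫ x, g x ∂mu := by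
  have := integral_lt_of_lt_on (g := fun x => -g x) (K1 := -K1) (K2 := -K2) hB hpos
    hint.neg (hae.mono fun x hx => by simpa using neg_le_neg hx)
    (fun x hx => by simpa using neg_le_neg (hon x hx)) (by linarith)
  rw [integral_neg] at this
  linarith


variable {a b : ℝ}

/-- Mean property of QAM: it lies in `[suppInf, suppSup]` and `f` maps it to the integral. -/
lemma QAM_spec (hab : a ≤ b) {f : ℝ → ℝ} {mu : Measure ℝ} (hf : CM f (Icc a b))
    (h : IsCSP (Icc a b) mu) :
    QAM f (Icc a b) mu ∈ Icc (suppInf mu) (suppSup mu) ∧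
      f (QAM f (Icc a b) mu) = ∫ t, f t ∂mu := by
  haveI := h.1
  obtain ⟨hab', hαI, hβI⟩ := csp_suppInf_le h
  obtain ⟨_, _, _, _, hae⟩ := csp_facts h
  set α := suppInf mu
  set β := suppSup mu
  have hIccsub : Icc α β ⊆ Icc a b := Icc_subset_Icc hαI.1 hβI.2
  set g := ftil a b hab f with hg
  have hint : Integrable g mu := ftil_integrable hab hf.1 mu
  have hIeq : ∫ t, f t ∂mu = ∫ t, g t ∂mu := integral_ftil_eq hab h.2.1
  have hmem : ∃ c ∈ Icc α β, f c = ∫ t, f t ∂mu := by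
    rcases hf.2 with hmono | hanti
    · have hub : ∀ᵐ x ∂mu, g x ≤ f β := hae.mono fun x hx => by
        rw [hg, ftil_eq_of_mem hab (hIccsub hx)]
        exact hmono.monotoneOn (hIccsub hx) hβI hx.2
      have hlb : ∀ᵐ x ∂mu, f α ≤ g x := hae.mono fun x hx => by
        rw [hg, ftil_eq_of_mem hab (hIccsub hx)]
        exact hmono.monotoneOn hαI (hIccsub hx) hx.1
      have h1 : ∫ t, g t ∂mu ≤ f β := by
        calc ∫ t, g t ∂mu ≤ ∫ _t, f β ∂mu := integral_mono_ae hint (integrable_const _) hub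
        _ = f β := by simp
      have h2 : f α ≤ ∫ t, g t ∂mu := by
        calc f α = ∫ _t, f α ∂mu := by simp
        _ ≤ ∫ t, g t ∂mu := integral_mono_ae (integrable_const _) hint hlb
      have := intermediate_value_Icc hab' (hf.1.mono hIccsub)
      obtain ⟨c, hc, hfc⟩ := this ⟨h2, h1⟩
      exact ⟨c, hc, by rw [hfc, hIeq]⟩
    · have hub : ∀ᵐ x ∂mu, g x ≤ f α := hae.mono fun x hx => by
        rw [hg, ftil_eq_of_mem hab (hIccsub hx)]
        exact hanti.antitoneOn hαI (hIccsub hx) hx.1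
      have hlb : ∀ᵐ x ∂mu, f β ≤ g x := hae.mono fun x hx => by
        rw [hg, ftil_eq_of_mem hab (hIccsub hx)]
        exact hanti.antitoneOn (hIccsub hx) hβI hx.2
      have h1 : ∫ t, g t ∂mu ≤ f α := by
        calc ∫ t, g t ∂mu ≤ ∫ _t, f α ∂mu := integral_mono_ae hint (integrable_const _) hub
        _ = f α := by simp
      have h2 : f β ≤ ∫ t, g t ∂mu := by
        calc f β = ∫ _t, f β ∂mu := by simp
        _ ≤ ∫ t, g t ∂mu := integral_mono_ae (integrable_const _) hint hlb
      have := intermediate_value_Icc' hab' (hf.1.mono hIccsub)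
      obtain ⟨c, hc, hfc⟩ := this ⟨h2, h1⟩
      exact ⟨c, hc, by rw [hfc, hIeq]⟩
  obtain ⟨c, hc, hfc⟩ := hmem
  have hex : ∃ y ∈ Icc a b, f y = ∫ t, f t ∂mu := ⟨c, hIccsub hc, hfc⟩
  have hQmem : QAM f (Icc a b) mu ∈ Icc a b := Function.invFunOn_mem hex
  have hQeq : f (QAM f (Icc a b) mu) = ∫ t, f t ∂mu := Function.invFunOn_eq hex
  have hinj : Set.InjOn f (Icc a b) := by
    rcases hf.2 with hmono | hanti
    · exact hmono.injOn
    · exact hanti.injOn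
  have : QAM f (Icc a b) mu = c := hinj hQmem (hIccsub hc) (by rw [hQeq, hfc])
  exact ⟨this ▸ hc, hQeq⟩

/-- Strict internality of QAM when the support is nondegenerate. -/
lemma QAM_strict (hab : a ≤ b) {f : ℝ → ℝ} {mu : Measure ℝ} (hf : CM f (Icc a b))
    (h : IsCSP (Icc a b) mu) (hlt : suppInf mu < suppSup mu) :
    QAM f (Icc a b) mu ∈ Ioo (suppInf mu) (suppSup mu) := by
  haveI := h.1
  obtain ⟨hab', hαI, hβI⟩ := csp_suppInf_le h
  obtain ⟨hαmem, hβmem, _, _, hae⟩ := csp_facts h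
  set α := suppInf mu with hα
  set β := suppSup mu with hβ
  have hIccsub : Icc α β ⊆ Icc a b := Icc_subset_Icc hαI.1 hβI.2
  set g := ftil a b hab f with hg
  have hint : Integrable g mu := ftil_integrable hab hf.1 mu
  have hIeq : ∫ t, f t ∂mu = ∫ t, g t ∂mu := integral_ftil_eq hab h.2.1
  set mid := (α + β) / 2 with hmid
  set ε := (β - α) / 2 with hε
  have hε0 : 0 < ε := by rw [hε]; linarith
  have hmidI : mid ∈ Icc a b := hIccsub ⟨by rw [hmid]; linarith, by rw [hmid]; linarith⟩
  have hmidα : α < mid := by rw [hmid]; linarith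
  have hmidβ : mid < β := by rw [hmid]; linarith
  have hIccnull : mu (Icc α β)ᶜ = 0 := by
    have := hae
    rw [ae_iff] at this
    exact this
  -- lower ball near α
  set Bα := Metric.ball α ε ∩ Icc α β with hBα
  have hBαm : MeasurableSet Bα := measurableSet_ball.inter measurableSet_Icc
  have hBαpos : mu Bα ≠ 0 := by
    rw [hBα, measure_inter_conull hIccnull]
    exact ne_of_gt (hαmem ε hε0)
  have hBαle : ∀ x ∈ Bα, x ∈ Icc a b ∧ x ≤ mid := by
    rintro x ⟨hx1, hx2⟩
    rw [Metric.mem_ball, Real.dist_eq] at hx1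
    refine ⟨hIccsub hx2, ?_⟩
    have := abs_lt.1 hx1
    rw [hmid]; rw [hε] at this; linarith
  -- upper ball near β
  set Bβ := Metric.ball β ε ∩ Icc α β with hBβ
  have hBβm : MeasurableSet Bβ := measurableSet_ball.inter measurableSet_Icc
  have hBβpos : mu Bβ ≠ 0 := by
    rw [hBβ, measure_inter_conull hIccnull]
    exact ne_of_gt (hβmem ε hε0)
  have hBβge : ∀ x ∈ Bβ, x ∈ Icc a b ∧ mid ≤ x := by
    rintro x ⟨hx1, hx2⟩
    rw [Metric.mem_ball, Real.dist_eq] at hx1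
    refine ⟨hIccsub hx2, ?_⟩
    have := abs_lt.1 hx1
    rw [hmid]; rw [hε] at this; linarith
  have hmem : ∃ c ∈ Ioo α β, f c = ∫ t, f t ∂mu := by
    rcases hf.2 with hmono | hanti
    · have hub : ∀ᵐ x ∂mu, g x ≤ f β := hae.mono fun x hx => by
        rw [hg, ftil_eq_of_mem hab (hIccsub hx)]
        exact hmono.monotoneOn (hIccsub hx) hβI hx.2
      have hlb : ∀ᵐ x ∂mu, f α ≤ g x := hae.mono fun x hx => by
        rw [hg, ftil_eq_of_mem hab (hIccsub hx)]
        exact hmono.monotoneOn hαI (hIccsub hx) hx.1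
      have h1 : ∫ t, g t ∂mu < f β := by
        refine integral_lt_of_lt_on hBαm hBαpos hint hub ?_ (hmono hmidI hβI hmidβ)
        intro x hx
        obtain ⟨hxI, hxmid⟩ := hBαle x hx
        rw [hg, ftil_eq_of_mem hab hxI]
        exact hmono.monotoneOn hxI hmidI hxmid
      have h2 : f α < ∫ t, g t ∂mu := by
        refine integral_gt_of_gt_on hBβm hBβpos hint hlb ?_ (hmono hαI hmidI hmidα)
        intro x hx
        obtain ⟨hxI, hxmid⟩ := hBβge x hx
        rw [hg, ftil_eq_of_mem hab hxI]
        exact hmono.monotoneOn hmidI hxI hxmid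
      obtain ⟨c, hc, hfc⟩ := intermediate_value_Icc hab' (hf.1.mono hIccsub) ⟨h2.le, h1.le⟩
      refine ⟨c, ⟨?_, ?_⟩, by rw [hfc, hIeq]⟩
      · rcases eq_or_lt_of_le hc.1 with heq | hlt'
        · exfalso; rw [← heq] at hfc; exact absurd hfc (ne_of_lt h2)
        · exact hlt'
      · rcases eq_or_lt_of_le hc.2 with heq | hlt'
        · exfalso; rw [heq] at hfc; exact absurd hfc (ne_of_gt h1)
        · exact hlt'
    · have hub : ∀ᵐ x ∂mu, g x ≤ f α := hae.mono fun x hx => by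
        rw [hg, ftil_eq_of_mem hab (hIccsub hx)]
        exact hanti.antitoneOn hαI (hIccsub hx) hx.1
      have hlb : ∀ᵐ x ∂mu, f β ≤ g x := hae.mono fun x hx => by
        rw [hg, ftil_eq_of_mem hab (hIccsub hx)]
        exact hanti.antitoneOn (hIccsub hx) hβI hx.2
      have h1 : ∫ t, g t ∂mu < f α := by
        refine integral_lt_of_lt_on hBβm hBβpos hint hub ?_ (hanti hαI hmidI hmidα)
        intro x hx
        obtain ⟨hxI, hxmid⟩ := hBβge x hx
        rw [hg, ftil_eq_of_mem hab hxI]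
        exact hanti.antitoneOn hmidI hxI hxmid
      have h2 : f β < ∫ t, g t ∂mu := by
        refine integral_gt_of_gt_on hBαm hBαpos hint hlb ?_ (hanti hmidI hβI hmidβ)
        intro x hx
        obtain ⟨hxI, hxmid⟩ := hBαle x hx
        rw [hg, ftil_eq_of_mem hab hxI]
        exact hanti.antitoneOn hxI hmidI hxmid
      obtain ⟨c, hc, hfc⟩ := intermediate_value_Icc' hab' (hf.1.mono hIccsub) ⟨h2.le, h1.le⟩
      refine ⟨c, ⟨?_, ?_⟩, by rw [hfc, hIeq]⟩
      · rcases eq_or_lt_of_le hc.1 with heq | hlt'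
        · exfalso; rw [← heq] at hfc; exact absurd hfc (ne_of_gt h1)
        · exact hlt'
      · rcases eq_or_lt_of_le hc.2 with heq | hlt'
        · exfalso; rw [heq] at hfc; exact absurd hfc (ne_of_lt h2)
        · exact hlt'
  obtain ⟨c, hc, hfc⟩ := hmem
  have hcI : c ∈ Icc a b := hIccsub (Ioo_subset_Icc_self hc)
  have hex : ∃ y ∈ Icc a b, f y = ∫ t, f t ∂mu := ⟨c, hcI, hfc⟩
  have hQmem : QAM f (Icc a b) mu ∈ Icc a b := Function.invFunOn_mem hex
  have hQeq : f (QAM f (Icc a b) mu) = ∫ t, f t ∂mu := Function.invFunOn_eq hex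
  have hinj : Set.InjOn f (Icc a b) := by
    rcases hf.2 with hmono | hanti
    · exact hmono.injOn
    · exact hanti.injOn
  have : QAM f (Icc a b) mu = c := hinj hQmem hcI (by rw [hQeq, hfc])
  exact this ▸ hc



/-- The (Lebesgue-measurable) fibers of the family. -/
def Eset (F : ℝ → ℝ → ℝ) (f : ℝ → ℝ) : Set ℝ := Icc 0 1 ∩ {x | F x = f}

variable {F : ℝ → ℝ → ℝ} {T : Finset (ℝ → ℝ)}

lemma section_meas
    (hF2 : Measurable[(inferInstance : MeasurableSpace ℝ).prod Leb] (fun p : ℝ × ℝ => F p.2 p.1))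
    (t c : ℝ) : NullMeasurableSet {x : ℝ | F x t = c} volume := by
  have h1 : @Measurable ℝ (ℝ × ℝ) Leb ((inferInstance : MeasurableSpace ℝ).prod Leb)
      (fun x => ((t, x) : ℝ × ℝ)) := by
    refine Measurable.prodMk ?_ ?_
    · exact @measurable_const ℝ ℝ inferInstance Leb t
    · exact @measurable_id ℝ Leb
  have h2 : @Measurable ℝ ℝ Leb inferInstance (fun x => F x t) := hF2.comp h1
  exact h2 (measurableSet_singleton c)

lemma Esets_nullm
    (hF2 : Measurable[(inferInstance : MeasurableSpace ℝ).prod Leb] (fun p : ℝ × ℝ => F p.2 p.1))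
    (hT : ∀ x ∈ Icc (0:ℝ) 1, F x ∈ T) {f : ℝ → ℝ} (_hf : f ∈ T) :
    NullMeasurableSet (Eset F f) volume := by
  classical
  have sep : ∀ g : ℝ → ℝ, ∃ t : ℝ, g ≠ f → g t ≠ f t := by
    intro g
    by_cases h : g = f
    · exact ⟨0, fun hc => absurd h hc⟩
    · obtain ⟨t, ht⟩ := Function.ne_iff.1 h
      exact ⟨t, fun _ => ht⟩
  choose t' ht' using sep
  have key : Eset F f =
      Icc 0 1 ∩ ⋂ g ∈ (↑(T.erase f) : Set (ℝ → ℝ)), {x | F x (t' g) = f (t' g)} := by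
    ext x
    simp only [Eset, mem_inter_iff, mem_setOf_eq, mem_iInter]
    constructor
    · rintro ⟨hx01, hxf⟩
      exact ⟨hx01, fun g _ => by rw [hxf]⟩
    · rintro ⟨hx01, hx⟩
      refine ⟨hx01, ?_⟩
      by_contra hne
      have hmem : F x ∈ (↑(T.erase f) : Set (ℝ → ℝ)) := by
        simp only [Finset.coe_erase, mem_diff, mem_singleton_iff]
        exact ⟨hT x hx01, hne⟩
      exact (ht' (F x) hne) (hx (F x) hmem)
  rw [key]
  exact (measurableSet_Icc.nullMeasurableSet).inter
    (NullMeasurableSet.biInter ((T.erase f).countable_toSet)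
      fun g _ => section_meas hF2 _ _)

lemma Esets_disj {f g : ℝ → ℝ} (h : f ≠ g) : Eset F f ∩ Eset F g = ∅ := by
  ext x
  simp only [Eset, mem_inter_iff, mem_setOf_eq, mem_empty_iff_false, iff_false]
  rintro ⟨⟨_, h1⟩, ⟨_, h2⟩⟩
  exact h (h1 ▸ h2)

lemma union_Esets (hT : ∀ x ∈ Icc (0:ℝ) 1, F x ∈ T) :
    ⋃ f ∈ T, Eset F f = Icc 0 1 := by
  ext x
  simp only [mem_iUnion, Eset, mem_inter_iff, mem_setOf_eq, exists_prop]
  constructor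
  · rintro ⟨f, _, hx, _⟩; exact hx
  · intro hx; exact ⟨F x, hT x hx, hx, rfl⟩

lemma Esets_pairwise_aedisj :
    (↑T : Set (ℝ → ℝ)).Pairwise (Function.onFun (AEDisjoint volume) (Eset F)) := by
  intro f _ g _ hfg
  simp only [Function.onFun, AEDisjoint]
  rw [Esets_disj hfg]
  simp

lemma sum_w_eq_one
    (hF2 : Measurable[(inferInstance : MeasurableSpace ℝ).prod Leb] (fun p : ℝ × ℝ => F p.2 p.1))
    (hT : ∀ x ∈ Icc (0:ℝ) 1, F x ∈ T) :
    ∑ f ∈ T, volume (Eset F f) = 1 := by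
  rw [← measure_biUnion_finset₀ Esets_pairwise_aedisj (fun f hf => Esets_nullm hF2 hT hf)]
  rw [union_Esets hT, Real.volume_Icc]
  norm_num

lemma w_ne_top (f : ℝ → ℝ) : volume (Eset F f) ≠ ⊤ := by
  refine ne_of_lt (lt_of_le_of_lt (measure_mono (inter_subset_left)) ?_)
  rw [Real.volume_Icc]
  norm_num

/-- The key formula: `AF` of any measure is a finite combination of Dirac measures. -/
lemma AF_eq {a b : ℝ}
    (hF2 : Measurable[(inferInstance : MeasurableSpace ℝ).prod Leb] (fun p : ℝ × ℝ => F p.2 p.1))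
    (hT : ∀ x ∈ Icc (0:ℝ) 1, F x ∈ T) (mu : Measure ℝ) :
    AF F (Icc a b) mu
      = ∑ f ∈ T, volume (Eset F f) • Measure.dirac (QAM f (Icc a b) mu) := by
  classical
  set gq : ℝ → ℝ := fun x => QAM (F x) (Icc a b) mu with hgq
  have hU : Icc (0:ℝ) 1 = ⋃ f : {f // f ∈ T}, Eset F ↑f := by
    ext x
    simp only [mem_iUnion]
    constructor
    · intro hx; exact ⟨⟨F x, hT x hx⟩, hx, rfl⟩
    · rintro ⟨f, hx, _⟩; exact hx
  have hg : AEMeasurable gq (volume.restrict (Icc 0 1)) := by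
    rw [hU, aemeasurable_iUnion_iff]
    intro f
    have h1 : ∀ᵐ x ∂(volume.restrict (Eset F ↑f)), x ∈ Eset F ↑f :=
      ae_restrict_mem₀ (Esets_nullm hF2 hT f.2)
    exact aemeasurable_const.congr (h1.mono fun x hx => by rw [hgq]; simp only; rw [hx.2])
  refine Measure.ext fun s hs => ?_
  rw [AF, Measure.map_apply₀ hg hs.nullMeasurableSet]
  have hpre : NullMeasurableSet (gq ⁻¹' s) (volume.restrict (Icc 0 1)) :=
    hg.nullMeasurable hs
  rw [Measure.restrict_apply₀ hpre]
  have hsplit : gq ⁻¹' s ∩ Icc 0 1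
      = ⋃ f ∈ T, (if QAM f (Icc a b) mu ∈ s then Eset F f else ∅) := by
    ext x
    simp only [mem_inter_iff, mem_preimage, mem_iUnion, exists_prop]
    constructor
    · rintro ⟨hxs, hx01⟩
      refine ⟨F x, hT x hx01, ?_⟩
      rw [if_pos hxs]
      exact ⟨hx01, rfl⟩
    · rintro ⟨f, hfT, hx⟩
      by_cases hv : QAM f (Icc a b) mu ∈ s
      · rw [if_pos hv] at hx
        refine ⟨?_, hx.1⟩
        show gq x ∈ s
        rw [hgq]; simp only; rw [hx.2]; exact hv
      · rw [if_neg hv] at hx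
        exact absurd hx (notMem_empty x)
  rw [hsplit, measure_biUnion_finset₀]
  · rw [Measure.coe_finset_sum, Finset.sum_apply]
    refine Finset.sum_congr rfl fun f _ => ?_
    rw [Measure.smul_apply, Measure.dirac_apply' _ hs, smul_eq_mul]
    by_cases hv : QAM f (Icc a b) mu ∈ s
    · rw [if_pos hv, indicator_of_mem hv]
      simp
    · rw [if_neg hv, indicator_of_notMem hv]
      simp
  · intro f hf g hg hfg
    simp only [Function.onFun, AEDisjoint]
    have hsub : (if QAM f (Icc a b) mu ∈ s then Eset F f else ∅) ∩
        (if QAM g (Icc a b) mu ∈ s then Eset F g else ∅) ⊆ Eset F f ∩ Eset F g :=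
      inter_subset_inter (by split <;> simp) (by split <;> simp)
    rw [Esets_disj hfg] at hsub
    exact measure_mono_null hsub measure_empty
  · intro f hf
    split
    · exact Esets_nullm hF2 hT hf
    · exact MeasurableSet.empty.nullMeasurableSet



variable {T : Finset (ℝ → ℝ)} {w : (ℝ → ℝ) → ENNReal} {u : (ℝ → ℝ) → ℝ}

lemma nu_apply (w : (ℝ → ℝ) → ENNReal) (u : (ℝ → ℝ) → ℝ) {s : Set ℝ} (hs : MeasurableSet s) :
    (∑ f ∈ T, w f • Measure.dirac (u f)) s = ∑ f ∈ T, w f * s.indicator 1 (u f) := by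
  rw [Measure.coe_finset_sum, Finset.sum_apply]
  exact Finset.sum_congr rfl fun f _ => by
    rw [Measure.smul_apply, Measure.dirac_apply' _ hs, smul_eq_mul]

lemma S_nonempty (hw : ∑ f ∈ T, w f = 1) : (T.filter fun f => w f ≠ 0).Nonempty := by
  by_contra h
  rw [Finset.not_nonempty_iff_eq_empty, Finset.filter_eq_empty_iff] at h
  have : ∑ f ∈ T, w f = 0 := Finset.sum_eq_zero fun f hf => by
    have := h hf; simpa using this
  rw [hw] at this
  exact one_ne_zero this

lemma msupp_nu : msupp (∑ f ∈ T, w f • Measure.dirac (u f))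
    = ↑((T.filter fun f => w f ≠ 0).image u) := by
  classical
  set ν := ∑ f ∈ T, w f • Measure.dirac (u f) with hν
  ext x
  simp only [Finset.coe_image, mem_image, Finset.mem_coe, Finset.mem_filter]
  constructor
  · intro hx
    by_contra hnot
    push_neg at hnot
    have hclosed : IsClosed (↑((T.filter fun f => w f ≠ 0).image u) : Set ℝ) :=
      ((T.filter fun f => w f ≠ 0).image u).finite_toSet.isClosed
    have hxnot : x ∉ (↑((T.filter fun f => w f ≠ 0).image u) : Set ℝ) := by
      simp only [Finset.coe_image, mem_image, Finset.mem_coe, Finset.mem_filter]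
      rintro ⟨f, hf, rfl⟩
      exact hnot f hf rfl
    obtain ⟨ε, hε, hball⟩ := Metric.isOpen_iff.1 hclosed.isOpen_compl x hxnot
    have h0 : ν (Metric.ball x ε) = 0 := by
      rw [hν, nu_apply w u measurableSet_ball]
      refine Finset.sum_eq_zero fun f hf => ?_
      by_cases hwf : w f = 0
      · rw [hwf, zero_mul]
      · have : u f ∉ Metric.ball x ε := by
          intro hmem
          have := hball hmem
          simp only [mem_compl_iff, Finset.coe_image, mem_image, Finset.mem_coe,
            Finset.mem_filter] at this
          exact this ⟨f, ⟨hf, hwf⟩, rfl⟩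
        rw [indicator_of_notMem this, mul_zero]
    have := hx ε hε
    rw [h0] at this
    exact lt_irrefl _ this
  · rintro ⟨f, ⟨hfT, hwf⟩, rfl⟩
    intro ε hε
    have hterm : w f * (Metric.ball (u f) ε).indicator 1 (u f) = w f := by
      rw [indicator_of_mem (Metric.mem_ball_self hε), Pi.one_apply, mul_one]
    have hle : w f ≤ ν (Metric.ball (u f) ε) := by
      rw [hν, nu_apply w u measurableSet_ball, ← hterm]
      exact Finset.single_le_sum (f := fun g => w g * (Metric.ball (u f) ε).indicator 1 (u g)) (fun g _ => zero_le) hfT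
    exact lt_of_lt_of_le (pos_iff_ne_zero.2 hwf) hle

lemma inf'_eq_min'_image {ι : Type*} (s : Finset ι) (hs : s.Nonempty) (g : ι → ℝ) :
    s.inf' hs g = (s.image g).min' (hs.image g) := by
  apply le_antisymm
  · obtain ⟨i, hi, hmin⟩ := Finset.mem_image.1 ((s.image g).min'_mem (hs.image g))
    rw [← hmin]
    exact Finset.inf'_le g hi
  · obtain ⟨i, hi, heq⟩ := Finset.exists_mem_eq_inf' hs g
    rw [heq]
    exact Finset.min'_le _ _ (Finset.mem_image_of_mem g hi)

lemma sup'_eq_max'_image {ι : Type*} (s : Finset ι) (hs : s.Nonempty) (g : ι → ℝ) :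
    s.sup' hs g = (s.image g).max' (hs.image g) := by
  apply le_antisymm
  · obtain ⟨i, hi, heq⟩ := Finset.exists_mem_eq_sup' hs g
    rw [heq]
    exact Finset.le_max' _ _ (Finset.mem_image_of_mem g hi)
  · obtain ⟨i, hi, hmax⟩ := Finset.mem_image.1 ((s.image g).max'_mem (hs.image g))
    rw [← hmax]
    exact Finset.le_sup' g hi

lemma suppInf_nu (hw : ∑ f ∈ T, w f = 1) :
    suppInf (∑ f ∈ T, w f • Measure.dirac (u f))
      = (T.filter fun f => w f ≠ 0).inf' (S_nonempty hw) u := by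
  rw [suppInf, msupp_nu, Finset.Nonempty.csInf_eq_min' ((S_nonempty hw).image u),
    inf'_eq_min'_image]

lemma suppSup_nu (hw : ∑ f ∈ T, w f = 1) :
    suppSup (∑ f ∈ T, w f • Measure.dirac (u f))
      = (T.filter fun f => w f ≠ 0).sup' (S_nonempty hw) u := by
  rw [suppSup, msupp_nu, Finset.Nonempty.csSup_eq_max' ((S_nonempty hw).image u),
    sup'_eq_max'_image]

lemma nu_csp {a b : ℝ} (hw : ∑ f ∈ T, w f = 1)
    (hu : ∀ f ∈ T.filter fun f => w f ≠ 0, u f ∈ Icc a b) :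
    IsCSP (Icc a b) (∑ f ∈ T, w f • Measure.dirac (u f)) := by
  classical
  refine ⟨⟨?_⟩, ?_, ?_⟩
  · rw [nu_apply w u MeasurableSet.univ]
    simp only [indicator_univ, Pi.one_apply, mul_one]
    exact hw
  · rw [nu_apply w u measurableSet_Icc.compl]
    refine Finset.sum_eq_zero fun f hf => ?_
    by_cases hwf : w f = 0
    · rw [hwf, zero_mul]
    · rw [indicator_of_notMem, mul_zero]
      simp only [mem_compl_iff, not_not]
      exact hu f (Finset.mem_filter.2 ⟨hf, hwf⟩)
  · rw [msupp_nu]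
    rw [IsClosed.closure_eq (((T.filter fun f => w f ≠ 0).image u).finite_toSet.isClosed)]
    exact ((T.filter fun f => w f ≠ 0).image u).finite_toSet.isCompact

lemma integrable_dirac {g : ℝ → ℝ} {x : ℝ} : Integrable g (Measure.dirac x) := by
  have : g =ᵐ[Measure.dirac x] fun _ => g x := by
    rw [ae_dirac_eq]
    exact eventually_pure.2 rfl
  exact (integrable_const (g x)).congr this.symm

lemma nu_integral (hfin : ∀ f ∈ T, w f ≠ ⊤) (g : ℝ → ℝ) :
    ∫ t, g t ∂(∑ f ∈ T, w f • Measure.dirac (u f))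
      = ∑ f ∈ T.filter fun f => w f ≠ 0, (w f).toReal * g (u f) := by
  classical
  have hint : ∀ f ∈ T, Integrable g (w f • Measure.dirac (u f)) := by
    intro f hf
    by_cases hwf : w f = 0
    · rw [hwf, zero_smul]
      exact integrable_zero_measure
    · exact (integrable_smul_measure hwf (hfin f hf)).2 integrable_dirac
  rw [integral_finset_sum_measure hint]
  have heach : ∀ f ∈ T, ∫ t, g t ∂(w f • Measure.dirac (u f)) = (w f).toReal * g (u f) :=
    fun f _ => by rw [integral_smul_measure, integral_dirac, smul_eq_mul]
  rw [Finset.sum_congr rfl heach]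
  exact (Finset.sum_filter_of_ne (p := fun f => w f ≠ 0)
    (f := fun f => (w f).toReal * g (u f)) (s := T)
    (fun f _ hne hwf => hne (by simp [hwf]))).symm


lemma tendsto_inf' {ι : Type*} {s : Finset ι} (hs : s.Nonempty) {z : ℕ → ι → ℝ} {z' : ι → ℝ}
    (h : ∀ i ∈ s, Tendsto (fun j => z j i) atTop (𝓝 (z' i))) :
    Tendsto (fun j => s.inf' hs (z j)) atTop (𝓝 (s.inf' hs z')) := by
  induction hs using Finset.Nonempty.cons_induction with
  | singleton a => simpa using h a (by simp)
  | cons a t hat hts ih =>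
    have key : ∀ g : ι → ℝ,
        (Finset.cons a t hat).inf' (Finset.cons_nonempty hat) g = min (g a) (t.inf' hts g) :=
      fun g => Finset.inf'_cons hts g
    simp only [key]
    exact (h a (Finset.mem_cons_self a t)).min (ih fun i hi => h i (Finset.mem_cons.2 (Or.inr hi)))

lemma tendsto_sup' {ι : Type*} {s : Finset ι} (hs : s.Nonempty) {z : ℕ → ι → ℝ} {z' : ι → ℝ}
    (h : ∀ i ∈ s, Tendsto (fun j => z j i) atTop (𝓝 (z' i))) :
    Tendsto (fun j => s.sup' hs (z j)) atTop (𝓝 (s.sup' hs z')) := by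
  induction hs using Finset.Nonempty.cons_induction with
  | singleton a => simpa using h a (by simp)
  | cons a t hat hts ih =>
    have key : ∀ g : ι → ℝ,
        (Finset.cons a t hat).sup' (Finset.cons_nonempty hat) g = max (g a) (t.sup' hts g) :=
      fun g => Finset.sup'_cons hts g
    simp only [key]
    exact (h a (Finset.mem_cons_self a t)).max (ih fun i hi => h i (Finset.mem_cons.2 (Or.inr hi)))

section Main

variable {a b : ℝ} {F : ℝ → ℝ → ℝ} {T : Finset (ℝ → ℝ)}

/-- One-step facts. -/
lemma step (hab : a ≤ b)
    (hF2 : Measurable[(inferInstance : MeasurableSpace ℝ).prod Leb] (fun p : ℝ × ℝ => F p.2 p.1))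
    (hT : ∀ x ∈ Icc (0:ℝ) 1, F x ∈ T) (hCM : ∀ f ∈ T, CM f (Icc a b))
    {mu : Measure ℝ} (hmu : IsCSP (Icc a b) mu) :
    IsCSP (Icc a b) (AF F (Icc a b) mu) ∧
    suppInf (AF F (Icc a b) mu)
      = (T.filter fun f => volume (Eset F f) ≠ 0).inf'
          (S_nonempty (sum_w_eq_one hF2 hT)) (fun f => QAM f (Icc a b) mu) ∧
    suppSup (AF F (Icc a b) mu)
      = (T.filter fun f => volume (Eset F f) ≠ 0).sup'
          (S_nonempty (sum_w_eq_one hF2 hT)) (fun f => QAM f (Icc a b) mu) ∧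
    suppInf mu ≤ suppInf (AF F (Icc a b) mu) ∧
    suppSup (AF F (Icc a b) mu) ≤ suppSup mu := by
  have hw : ∑ f ∈ T, volume (Eset F f) = 1 := sum_w_eq_one hF2 hT
  have hform := AF_eq (a := a) (b := b) hF2 hT mu
  obtain ⟨hab', hαI, hβI⟩ := csp_suppInf_le hmu
  have hmean : ∀ f ∈ T.filter (fun f => volume (Eset F f) ≠ 0),
      QAM f (Icc a b) mu ∈ Icc (suppInf mu) (suppSup mu) := fun f hf =>
    (QAM_spec hab (hCM f (Finset.filter_subset _ _ hf)) hmu).1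
  have hmemI : ∀ f ∈ T.filter (fun f => volume (Eset F f) ≠ 0),
      QAM f (Icc a b) mu ∈ Icc a b := fun f hf =>
    Icc_subset_Icc hαI.1 hβI.2 (hmean f hf)
  refine ⟨hform ▸ nu_csp hw hmemI, hform ▸ suppInf_nu hw, hform ▸ suppSup_nu hw, ?_, ?_⟩
  · rw [hform, suppInf_nu hw]
    exact Finset.le_inf' _ _ fun f hf => (hmean f hf).1
  · rw [hform, suppSup_nu hw]
    exact Finset.sup'_le _ _ fun f hf => (hmean f hf).2

lemma master (hab : a ≤ b)
    (hF2 : Measurable[(inferInstance : MeasurableSpace ℝ).prod Leb] (fun p : ℝ × ℝ => F p.2 p.1))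
    (hT : ∀ x ∈ Icc (0:ℝ) 1, F x ∈ T) (hCM : ∀ f ∈ T, CM f (Icc a b))
    {mu : Measure ℝ} (hmu : IsCSP (Icc a b) mu) :
    (∀ n, IsCSP (Icc a b) ((AF F (Icc a b))^[n] mu)) ∧
    Monotone (fun n => suppInf ((AF F (Icc a b))^[n] mu)) ∧
    Antitone (fun n => suppSup ((AF F (Icc a b))^[n] mu)) ∧
    (∀ n, a ≤ suppInf ((AF F (Icc a b))^[n] mu) ∧
      suppSup ((AF F (Icc a b))^[n] mu) ≤ b ∧
      suppInf ((AF F (Icc a b))^[n] mu) ≤ suppSup ((AF F (Icc a b))^[n] mu)) ∧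
    (⨆ n, suppInf ((AF F (Icc a b))^[n] mu)) = ⨅ n, suppSup ((AF F (Icc a b))^[n] mu) := by
  classical
  set P : ℕ → Measure ℝ := fun n => (AF F (Icc a b))^[n] mu with hPdef
  have hPsucc : ∀ n, P (n + 1) = AF F (Icc a b) (P n) := fun n =>
    Function.iterate_succ_apply' (AF F (Icc a b)) n mu
  have hw : ∑ f ∈ T, volume (Eset F f) = 1 := sum_w_eq_one hF2 hT
  have hS : (T.filter fun f => volume (Eset F f) ≠ 0).Nonempty := S_nonempty hw
  set S := T.filter fun f => volume (Eset F f) ≠ 0 with hSdef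
  have hP : ∀ n, IsCSP (Icc a b) (P n) := by
    intro n
    induction n with
    | zero => exact hmu
    | succ n ih => rw [hPsucc]; exact (step hab hF2 hT hCM ih).1
  set αs : ℕ → ℝ := fun n => suppInf (P n) with hαs
  set βs : ℕ → ℝ := fun n => suppSup (P n) with hβs
  set vv : ℕ → (ℝ → ℝ) → ℝ := fun n f => QAM f (Icc a b) (P n) with hvv
  have hvmem : ∀ n, ∀ f ∈ S, vv n f ∈ Icc a b := by
    intro n f hf
    obtain ⟨_, hαI, hβI⟩ := csp_suppInf_le (hP n)
    exact Icc_subset_Icc hαI.1 hβI.2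
      (QAM_spec hab (hCM f (Finset.filter_subset _ _ hf)) (hP n)).1
  have hstepn : ∀ n, αs (n+1) = S.inf' hS (vv n) ∧ βs (n+1) = S.sup' hS (vv n) ∧
      αs n ≤ αs (n+1) ∧ βs (n+1) ≤ βs n := by
    intro n
    have h := step hab hF2 hT hCM (hP n)
    have e1 : αs (n+1) = suppInf (AF F (Icc a b) (P n)) := by rw [hαs]; simp only; rw [hPsucc]
    have e2 : βs (n+1) = suppSup (AF F (Icc a b) (P n)) := by rw [hβs]; simp only; rw [hPsucc]
    exact ⟨by rw [e1]; exact h.2.1, by rw [e2]; exact h.2.2.1,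
      by rw [e1]; exact h.2.2.2.1, by rw [e2]; exact h.2.2.2.2⟩
  have hmono : Monotone αs := monotone_nat_of_le_succ fun n => (hstepn n).2.2.1
  have hanti : Antitone βs := antitone_nat_of_succ_le fun n => (hstepn n).2.2.2
  have hbounds : ∀ n, a ≤ αs n ∧ βs n ≤ b ∧ αs n ≤ βs n := by
    intro n
    obtain ⟨h1, h2, h3⟩ := csp_suppInf_le (hP n)
    exact ⟨h2.1, h3.2, h1⟩
  have hbddA : BddAbove (range αs) := by
    refine ⟨b, ?_⟩
    rintro x ⟨n, rfl⟩
    exact le_trans (hbounds n).2.2 (hbounds n).2.1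
  have hbddB : BddBelow (range βs) := by
    refine ⟨a, ?_⟩
    rintro x ⟨n, rfl⟩
    exact le_trans (hbounds n).1 (hbounds n).2.2
  refine ⟨hP, hmono, hanti, hbounds, ?_⟩
  set A := ⨆ n, αs n with hA
  set B := ⨅ n, βs n with hB
  have hαtend : Tendsto αs atTop (𝓝 A) := tendsto_atTop_ciSup hmono hbddA
  have hβtend : Tendsto βs atTop (𝓝 B) := tendsto_atTop_ciInf hanti hbddB
  have hAge : ∀ n, αs n ≤ A := fun n => le_ciSup hbddA n
  have hBle : ∀ n, B ≤ βs n := fun n => ciInf_le hbddB n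
  have hAB : A ≤ B := by
    refine le_ciInf fun m => ciSup_le fun n => ?_
    calc αs n ≤ αs (max n m) := hmono (le_max_left _ _)
    _ ≤ βs (max n m) := (hbounds _).2.2
    _ ≤ βs m := hanti (le_max_right _ _)
  by_contra hne
  have hlt : A < B := lt_of_le_of_ne hAB hne
  have haA : a ≤ A := le_trans (hbounds 0).1 (hAge 0)
  have hBb : B ≤ b := le_trans (hBle 0) (hbounds 0).2.1
  -- extract a convergent subsequence of the QAM vectors
  set y : ℕ → (↥S → ℝ) := fun n f => vv n ↑f with hy
  have hyK : ∀ n, y n ∈ Set.pi univ (fun _ : ↥S => Icc a b) := by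
    intro n
    rw [Set.mem_univ_pi]
    exact fun f => hvmem n ↑f f.2
  obtain ⟨xs, hxsK, φ, hφ, hconv⟩ :=
    (isCompact_univ_pi fun _ : ↥S => isCompact_Icc).tendsto_subseq hyK
  have hcoord : ∀ f : ↥S, Tendsto (fun j => vv (φ j) ↑f) atTop (𝓝 (xs f)) := by
    intro f
    exact tendsto_pi_nhds.1 hconv f
  set us : (ℝ → ℝ) → ℝ := fun f => if h : f ∈ S then xs ⟨f, h⟩ else a with hus
  have husS : ∀ (f) (hf : f ∈ S), us f = xs ⟨f, hf⟩ := fun f hf => dif_pos hf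
  have husI : ∀ f ∈ S, us f ∈ Icc a b := by
    intro f hf
    rw [husS f hf]
    exact Set.mem_univ_pi.1 hxsK ⟨f, hf⟩
  set Q := ∑ f ∈ T, volume (Eset F f) • Measure.dirac (us f) with hQ
  have hQcsp : IsCSP (Icc a b) Q := nu_csp hw husI
  have hQinf : suppInf Q = S.inf' hS us := suppInf_nu hw
  have hQsup : suppSup Q = S.sup' hS us := suppSup_nu hw
  have hφ1 : Tendsto (fun j => φ j + 1) atTop atTop :=
    (tendsto_add_atTop_nat 1).comp hφ.tendsto_atTop
  have hinfA : S.inf' hS us = A := by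
    have h1 : Tendsto (fun j => αs (φ j + 1)) atTop (𝓝 A) := hαtend.comp hφ1
    have h2 : Tendsto (fun j => S.inf' hS (vv (φ j))) atTop (𝓝 (S.inf' hS us)) := by
      refine tendsto_inf' hS fun f hf => ?_
      rw [husS f hf]
      exact hcoord ⟨f, hf⟩
    have h3 : (fun j => αs (φ j + 1)) = fun j => S.inf' hS (vv (φ j)) :=
      funext fun j => (hstepn (φ j)).1
    rw [h3] at h1
    exact tendsto_nhds_unique h2 h1
  have hsupB : S.sup' hS us = B := by
    have h1 : Tendsto (fun j => βs (φ j + 1)) atTop (𝓝 B) := hβtend.comp hφ1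
    have h2 : Tendsto (fun j => S.sup' hS (vv (φ j))) atTop (𝓝 (S.sup' hS us)) := by
      refine tendsto_sup' hS fun f hf => ?_
      rw [husS f hf]
      exact hcoord ⟨f, hf⟩
    have h3 : (fun j => βs (φ j + 1)) = fun j => S.sup' hS (vv (φ j)) :=
      funext fun j => (hstepn (φ j)).2.1
    rw [h3] at h1
    exact tendsto_nhds_unique h2 h1
  have hQlt : suppInf Q < suppSup Q := by rw [hQinf, hQsup, hinfA, hsupB]; exact hlt
  have hqlt : ∀ f ∈ S, QAM f (Icc a b) Q < B := by
    intro f hf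
    have := (QAM_strict hab (hCM f (Finset.filter_subset _ _ hf)) hQcsp hQlt).2
    rwa [hQsup, hsupB] at this
  set r := S.sup' hS (fun f => QAM f (Icc a b) Q) with hr
  have hrB : r < B := (Finset.sup'_lt_iff hS).2 hqlt
  have hrA : A < r := by
    obtain ⟨f0, hf0, heq⟩ := Finset.exists_mem_eq_sup' hS (fun f => QAM f (Icc a b) Q)
    rw [hr, heq]
    have := (QAM_strict hab (hCM f0 (Finset.filter_subset _ _ hf0)) hQcsp hQlt).1
    rwa [hQinf, hinfA] at this
  set r' := (r + B) / 2 with hr'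
  have hrr' : r < r' := by rw [hr']; linarith
  have hr'B : r' < B := by rw [hr']; linarith
  have hr'I : r' ∈ Icc a b := ⟨by rw [hr']; linarith, by rw [hr']; linarith⟩
  have hPn1 : ∀ n, P (n+1) = ∑ f ∈ T, volume (Eset F f) • Measure.dirac (vv n f) := by
    intro n
    rw [hPsucc n]
    exact AF_eq hF2 hT (P n)
  have hev : ∀ f ∈ S, ∀ᶠ j in atTop, vv (φ j + 1) f ≤ r' := by
    intro f hf
    have hfCM := hCM f (Finset.filter_subset _ _ hf)
    have hint_tend : Tendsto (fun j => ∫ t, f t ∂(P (φ j + 1))) atTop (𝓝 (∫ t, f t ∂Q)) := by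
      have hrw1 : ∀ j, ∫ t, f t ∂(P (φ j + 1))
          = ∑ f' ∈ S, (volume (Eset F f')).toReal * f (vv (φ j) f') := by
        intro j
        rw [hPn1 (φ j)]
        exact nu_integral (fun f' _ => w_ne_top f') f
      have hrw2 : ∫ t, f t ∂Q = ∑ f' ∈ S, (volume (Eset F f')).toReal * f (us f') := by
        rw [hQ]
        exact nu_integral (fun f' _ => w_ne_top f') f
      rw [hrw2]
      simp only [hrw1]
      refine tendsto_finset_sum _ fun f' hf' => Tendsto.const_mul _ ?_
      have hc : ContinuousWithinAt f (Icc a b) (us f') := hfCM.1 _ (husI f' hf')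
      refine hc.tendsto.comp ?_
      rw [tendsto_nhdsWithin_iff]
      constructor
      · rw [husS f' hf']
        exact hcoord ⟨f', hf'⟩
      · exact Eventually.of_forall fun j => hvmem (φ j) f' hf'
    have hq := QAM_spec hab hfCM hQcsp
    have hqr : QAM f (Icc a b) Q ≤ r := by
      rw [hr]; exact Finset.le_sup' (fun f => QAM f (Icc a b) Q) hf
    have hqmem : QAM f (Icc a b) Q ∈ Icc a b := by
      obtain ⟨_, hαI, hβI⟩ := csp_suppInf_le hQcsp
      exact Icc_subset_Icc hαI.1 hβI.2 hq.1
    rcases hfCM.2 with hmono' | hanti'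
    · have hflt : ∫ t, f t ∂Q < f r' := by
        rw [← hq.2]
        exact hmono' hqmem hr'I (lt_of_le_of_lt hqr hrr')
      have hev' : ∀ᶠ j in atTop, ∫ t, f t ∂(P (φ j + 1)) < f r' :=
        hint_tend.eventually_lt_const hflt
      refine hev'.mono fun j hj => ?_
      by_contra hgt
      push_neg at hgt
      have hvm : vv (φ j + 1) f ∈ Icc a b := hvmem (φ j + 1) f hf
      have h1 : f r' < f (vv (φ j + 1) f) := hmono' hr'I hvm hgt
      have h2 : f (vv (φ j + 1) f) = ∫ t, f t ∂(P (φ j + 1)) :=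
        (QAM_spec hab hfCM (hP (φ j + 1))).2
      rw [h2] at h1
      linarith
    · have hflt : f r' < ∫ t, f t ∂Q := by
        rw [← hq.2]
        exact hanti' hqmem hr'I (lt_of_le_of_lt hqr hrr')
      have hev' : ∀ᶠ j in atTop, f r' < ∫ t, f t ∂(P (φ j + 1)) :=
        hint_tend.eventually_const_lt hflt
      refine hev'.mono fun j hj => ?_
      by_contra hgt
      push_neg at hgt
      have hvm : vv (φ j + 1) f ∈ Icc a b := hvmem (φ j + 1) f hf
      have h1 : f (vv (φ j + 1) f) < f r' := hanti' hr'I hvm hgt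
      have h2 : f (vv (φ j + 1) f) = ∫ t, f t ∂(P (φ j + 1)) :=
        (QAM_spec hab hfCM (hP (φ j + 1))).2
      rw [h2] at h1
      linarith
  have hall : ∀ᶠ j in atTop, ∀ f ∈ S, vv (φ j + 1) f ≤ r' := (Finset.eventually_all S).2 hev
  obtain ⟨j, hj⟩ := hall.exists
  have hβsj : βs (φ j + 1 + 1) ≤ r' := by
    rw [(hstepn (φ j + 1)).2.1]
    exact Finset.sup'_le _ _ hj
  have := hBle (φ j + 1 + 1)
  linarith

end Main

end Stmt18

open Stmt18

theorem stmt18 (a b : ℝ) (hab : a ≤ b) (F : ℝ → ℝ → ℝ)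
    (hF : Admissible F (Icc a b))
    (hfin : (F '' Icc (0:ℝ) 1).Finite) :
    ∃ Kmean : Measure ℝ → ℝ,
      (IsMean (Icc a b) Kmean ∧ IsInvariantMean F (Icc a b) Kmean) ∧
      ∀ K' : Measure ℝ → ℝ, IsMean (Icc a b) K' ∧ IsInvariantMean F (Icc a b) K' →
        ∀ mu : Measure ℝ, IsCSP (Icc a b) mu → K' mu = Kmean mu := by
  classical
  set T : Finset (ℝ → ℝ) := hfin.toFinset with hTdef
  have hT : ∀ x ∈ Icc (0:ℝ) 1, F x ∈ T := fun x hx => hfin.mem_toFinset.2 ⟨x, hx, rfl⟩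
  have hCM : ∀ f ∈ T, CM f (Icc a b) := by
    intro f hf
    obtain ⟨x, hx, rfl⟩ := hfin.mem_toFinset.1 hf
    exact hF.1 x hx
  have hF2 := hF.2
  refine ⟨LF F (Icc a b), ⟨?_, ?_⟩, ?_⟩
  · -- IsMean
    intro mu hmu
    obtain ⟨hP, hmono, hanti, hbounds, heq⟩ := master hab hF2 hT hCM hmu
    have hbddA : BddAbove (range fun n => suppInf ((AF F (Icc a b))^[n] mu)) := by
      refine ⟨b, ?_⟩
      rintro x ⟨n, rfl⟩
      exact le_trans (hbounds n).2.2 (hbounds n).2.1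
    have hbddB : BddBelow (range fun n => suppSup ((AF F (Icc a b))^[n] mu)) := by
      refine ⟨a, ?_⟩
      rintro x ⟨n, rfl⟩
      exact le_trans (hbounds n).1 (hbounds n).2.2
    show LF F (Icc a b) mu ∈ Icc (suppInf mu) (suppSup mu)
    have hLF : LF F (Icc a b) mu = ⨆ n, suppInf ((AF F (Icc a b))^[n] mu) := rfl
    constructor
    · rw [hLF]
      exact le_ciSup hbddA 0
    · rw [hLF, heq]
      exact ciInf_le hbddB 0
  · -- invariance
    intro mu hmu
    obtain ⟨hP, hmono, hanti, hbounds, heq⟩ := master hab hF2 hT hCM hmu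
    have hbddA : BddAbove (range fun n => suppInf ((AF F (Icc a b))^[n] mu)) := by
      refine ⟨b, ?_⟩
      rintro x ⟨n, rfl⟩
      exact le_trans (hbounds n).2.2 (hbounds n).2.1
    have hbddA' : BddAbove (range fun n => suppInf ((AF F (Icc a b))^[n+1] mu)) := by
      refine ⟨b, ?_⟩
      rintro x ⟨n, rfl⟩
      exact le_trans (hbounds (n+1)).2.2 (hbounds (n+1)).2.1
    have h1 : LF F (Icc a b) (AF F (Icc a b) mu)
        = ⨆ n, suppInf ((AF F (Icc a b))^[n+1] mu) := by
      have : ∀ n, (AF F (Icc a b))^[n] (AF F (Icc a b) mu)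
          = (AF F (Icc a b))^[n+1] mu := fun n =>
        (Function.iterate_succ_apply (AF F (Icc a b)) n mu).symm
      show (⨆ n, suppInf ((AF F (Icc a b))^[n] (AF F (Icc a b) mu))) = _
      exact congrArg iSup (funext fun n => by rw [this n])
    have h2 : LF F (Icc a b) mu = ⨆ n, suppInf ((AF F (Icc a b))^[n] mu) := rfl
    rw [h1, h2]
    apply le_antisymm
    · exact ciSup_le fun n => le_ciSup hbddA (n + 1)
    · exact ciSup_le fun n => le_trans (hmono (Nat.le_succ n)) (le_ciSup hbddA' n)
  · -- uniqueness
    rintro K' ⟨hK'm, hK'i⟩ mu hmu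
    obtain ⟨hP, hmono, hanti, hbounds, heq⟩ := master hab hF2 hT hCM hmu
    have hKn : ∀ n, K' ((AF F (Icc a b))^[n] mu) = K' mu := by
      intro n
      induction n with
      | zero => rfl
      | succ n ih =>
        rw [Function.iterate_succ_apply' (AF F (Icc a b)) n mu]
        rw [hK'i _ (hP n)]
        exact ih
    have hbound : ∀ n, suppInf ((AF F (Icc a b))^[n] mu) ≤ K' mu ∧
        K' mu ≤ suppSup ((AF F (Icc a b))^[n] mu) := by
      intro n
      have := hK'm _ (hP n)
      rw [hKn n] at this
      exact ⟨this.1, this.2⟩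
    have hle1 : (⨆ n, suppInf ((AF F (Icc a b))^[n] mu)) ≤ K' mu :=
      ciSup_le fun n => (hbound n).1
    have hle2 : K' mu ≤ ⨅ n, suppSup ((AF F (Icc a b))^[n] mu) :=
      le_ciInf fun n => (hbound n).2
    rw [← heq] at hle2
    show K' mu = ⨆ n, suppInf ((AF F (Icc a b))^[n] mu)
    exact le_antisymm hle2 hle1
end
end

section
/- Let $I$ be a compact interval, $\mathcal{T}$ a finite set of continuous strictly monotone functions on $I$, and define $d(t) := \max_{l,u\in\mathcal{T}} \sup\{|\mathscr{A}_l(\mathbb{P}) - \mathscr{A}_u(\mathbb{P})| : \mathbb{P}\in\mathcal{P}(I), |\gamma(\mathbb{P})| \le t\}$ for $t \in (0,|I|]$. If $\mathcal{F}$ is an admissible family with $\mathscr{A}_{l_x} \le \mathscr{A}_{f_x} \le \mathscr{A}_{u_x}$ for some $l_x, u_x \in \mathcal{T}$ for each $x$, then $|\gamma(\mathbf{A}_\mathcal{F}(\mathbb{P}))| \le d(|\gamma(\mathbb{P})|)$ for every $\mathbb{P} \in \mathcal{P}(I)$ with $|\gamma(\mathbb{P})| > 0$. -/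
open MeasureTheory Set Filter Topology

noncomputable section

lemma invFunOn_Icc_mem' (f : ℝ → ℝ) (a b y : ℝ) :
    Function.invFunOn f (Icc a b) y ∈ insert (Classical.choice (inferInstance : Nonempty ℝ)) (Icc a b) := by
  by_cases h : ∃ x ∈ Icc a b, f x = y
  · exact Set.mem_insert_iff.mpr (Or.inr (Function.invFunOn_mem h))
  · rw [Function.invFunOn_neg h]; exact Set.mem_insert _ _

theorem stmt19 (a b : ℝ) (hab : a ≤ b)
    (T : Finset (ℝ → ℝ)) (hT : ∀ f ∈ T, CM f (Icc a b))
    (F : ℝ → ℝ → ℝ) (hF : Admissible F (Icc a b))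
    (hbd : ∀ x ∈ Icc (0:ℝ) 1, ∃ l ∈ T, ∃ u ∈ T, ∀ mu : Measure ℝ, IsCSP (Icc a b) mu →
      QAM l (Icc a b) mu ≤ QAM (F x) (Icc a b) mu ∧
      QAM (F x) (Icc a b) mu ≤ QAM u (Icc a b) mu) :
    ∀ mu : Measure ℝ, IsCSP (Icc a b) mu → 0 < gammaLen mu →
      gammaLen (AF F (Icc a b) mu) ≤
        sSup {d : ℝ | ∃ l ∈ T, ∃ u ∈ T, ∃ nu : Measure ℝ,
          IsCSP (Icc a b) nu ∧ gammaLen nu ≤ gammaLen mu ∧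
          d = |QAM l (Icc a b) nu - QAM u (Icc a b) nu|} := by
  classical
  intro mu hmu _hpos
  set I := Icc a b with hI
  set c0 : ℝ := Classical.choice (inferInstance : Nonempty ℝ) with hc0
  -- range bound on QAM
  have hK : ∀ (f : ℝ → ℝ) (nu : Measure ℝ), QAM f I nu ∈ Icc (min a c0) (max b c0) := by
    intro f nu
    have h := invFunOn_Icc_mem' f a b (∫ t, f t ∂nu)
    rcases Set.mem_insert_iff.mp h with h | h
    · rw [QAM, h]; exact ⟨min_le_right _ _, le_max_right _ _⟩
    · exact ⟨le_trans (min_le_left _ _) h.1, le_trans h.2 (le_max_left _ _)⟩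
  -- the sSup set and its bddAbove
  set S : Set ℝ := {d : ℝ | ∃ l ∈ T, ∃ u ∈ T, ∃ nu : Measure ℝ,
      IsCSP I nu ∧ gammaLen nu ≤ gammaLen mu ∧
      d = |QAM l I nu - QAM u I nu|} with hS
  have hbdd : BddAbove S := by
    refine ⟨max b c0 - min a c0, ?_⟩
    rintro d ⟨l, -, u, -, nu, -, -, rfl⟩
    have h1 := hK l nu
    have h2 := hK u nu
    rw [abs_sub_le_iff]
    exact ⟨by linarith [h1.1, h1.2, h2.1, h2.2], by linarith [h1.1, h1.2, h2.1, h2.2]⟩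
  obtain ⟨l0, hl0, u0, hu0, h0⟩ := hbd 0 (by norm_num)
  have hTne : T.Nonempty := ⟨l0, hl0⟩
  set S0 : Finset ℝ := T.image (fun f => QAM f I mu) with hS0
  have hS0ne : S0.Nonempty := hTne.image _
  set m := S0.min' hS0ne with hm
  set M := S0.max' hS0ne with hM
  obtain ⟨lm, hlm, hlmv⟩ := Finset.mem_image.mp (S0.min'_mem hS0ne)
  obtain ⟨um, hum, humv⟩ := Finset.mem_image.mp (S0.max'_mem hS0ne)
  have hg : ∀ x ∈ Icc (0:ℝ) 1, QAM (F x) I mu ∈ Icc m M := by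
    intro x hx
    obtain ⟨l, hl, u, hu, h⟩ := hbd x hx
    obtain ⟨h1, h2⟩ := h mu hmu
    exact ⟨le_trans (S0.min'_le _ (Finset.mem_image_of_mem _ hl)) h1,
      le_trans h2 (S0.le_max' _ (Finset.mem_image_of_mem _ hu))⟩
  have hmM : m ≤ M := le_trans (hg 0 (by norm_num)).1 (hg 0 (by norm_num)).2
  -- the chosen element of S
  have hmem : |QAM lm I mu - QAM um I mu| ∈ S :=
    ⟨lm, hlm, um, hum, mu, hmu, le_refl _, rfl⟩
  have hele : M - m ≤ |QAM lm I mu - QAM um I mu| := by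
    rw [hm, hM, ← hlmv, ← humv, abs_sub_comm]
    exact le_abs_self _
  have hfin : M - m ≤ sSup S := le_trans hele (le_csSup hbdd hmem)
  set g : ℝ → ℝ := fun x => QAM (F x) I mu with hgdef
  by_cases hmeas : AEMeasurable g ((volume : Measure ℝ).restrict (Icc 0 1))
  · -- support contained in [m, M]
    have hsub : msupp (AF F I mu) ⊆ Icc m M := by
      intro z hz
      by_contra hzI
      have hz' : z < m ∨ M < z := by
        rcases lt_or_ge z m with h | h
        · exact Or.inl h
        · rcases lt_or_ge M z with h' | h'
          · exact Or.inr h'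
          · exact absurd ⟨h, h'⟩ hzI
      have hball : ∃ ε > (0:ℝ), Metric.ball z ε ∩ Icc m M = ∅ := by
        rcases hz' with h | h
        · refine ⟨m - z, by linarith, ?_⟩
          ext w; simp only [Set.mem_inter_iff, Metric.mem_ball, Real.dist_eq,
            Set.mem_Icc, Set.mem_empty_iff_false, iff_false]
          rintro ⟨hw1, hw2, -⟩
          have := abs_lt.mp hw1
          linarith
        · refine ⟨z - M, by linarith, ?_⟩
          ext w; simp only [Set.mem_inter_iff, Metric.mem_ball, Real.dist_eq,
            Set.mem_Icc, Set.mem_empty_iff_false, iff_false]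
          rintro ⟨hw1, -, hw2⟩
          have := abs_lt.mp hw1
          linarith
      obtain ⟨ε, hε, hdisj⟩ := hball
      have happ : AF F I mu (Metric.ball z ε) = 0 := by
        rw [AF, Measure.map_apply_of_aemeasurable hmeas measurableSet_ball,
          Measure.restrict_apply' measurableSet_Icc]
        have : (fun x => QAM (F x) I mu) ⁻¹' Metric.ball z ε ∩ Icc 0 1 = ∅ := by
          ext x
          simp only [Set.mem_inter_iff, Set.mem_preimage, Set.mem_empty_iff_false, iff_false]
          rintro ⟨hx1, hx2⟩
          have hgx := hg x hx2
          have : QAM (F x) I mu ∈ Metric.ball z ε ∩ Icc m M := ⟨hx1, hgx⟩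
          rw [hdisj] at this
          exact this
        rw [this, measure_empty]
      have := hz ε hε
      rw [happ] at this
      exact lt_irrefl 0 this
    by_cases hne : (msupp (AF F I mu)).Nonempty
    · have hbd1 : suppSup (AF F I mu) ≤ M := csSup_le hne (fun x hx => (hsub hx).2)
      have hbd2 : m ≤ suppInf (AF F I mu) := le_csInf hne (fun x hx => (hsub hx).1)
      have : gammaLen (AF F I mu) ≤ M - m := by
        rw [gammaLen]; linarith
      exact le_trans this hfin
    · rw [Set.not_nonempty_iff_eq_empty] at hne
      have : gammaLen (AF F I mu) = 0 := by
        rw [gammaLen, suppSup, suppInf, hne, Real.sSup_empty, Real.sInf_empty, sub_zero]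
      rw [this]
      exact le_trans (by linarith) hfin
  · have hzero : AF F I mu = 0 := by
      rw [AF]
      exact Measure.map_of_not_aemeasurable hmeas
    have hempty : msupp (AF F I mu) = ∅ := by
      rw [hzero]
      ext x
      simp only [msupp, Set.mem_setOf_eq, Set.mem_empty_iff_false, iff_false, not_forall]
      exact ⟨1, one_pos, by simp⟩
    have : gammaLen (AF F I mu) = 0 := by
      rw [gammaLen, suppSup, suppInf, hempty, Real.sSup_empty, Real.sInf_empty, sub_zero]
    rw [this]
    exact le_trans (by linarith) hfin
end
end
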